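/- arXiv:2508.05809 — 11 statements merged into one kernel-verified Lean document; each statement's English description precedes it below -/
import Mathlib

section
/- Let L be an atomic 0-distributive lattice with least element 0 having at least three distinct atoms. Then the complement G^c(L) of the zero-divisor graph of L admits a finite resolving set (equivalently, the metric dimension dim_M(G^c(L)) is finite) if and only if the vertex set Z*(L) is finite (i.e. G^c(L) is a finite graph). -/
/-- The set of nonzero zero-divisors of a lattice `L` with least element `⊥`. -/
def ZStar (L : Type*) [Lattice L] [OrderBot L] : Type _ :=
  {a : L // a ≠ ⊥ ∧ ∃ b : L, b ≠ ⊥ ∧ a ⊓ b = ⊥}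

/-- The complement of the zero-divisor graph of a lattice `L`: vertices are the
nonzero zero-divisors, and distinct vertices are adjacent iff their meet is nonzero. -/
def GcL (L : Type*) [Lattice L] [OrderBot L] : SimpleGraph (ZStar L) where
  Adj x y := x ≠ y ∧ (x.1 ⊓ y.1 ≠ ⊥)
  symm := ⟨fun x y h => ⟨h.1.symm, by rw [inf_comm]; exact h.2⟩⟩
  loopless := ⟨fun x h => h.1 rfl⟩

/-- A set `S` of vertices is a resolving set for `G` if the distances to members of `S`
determine each vertex uniquely. -/
def IsResolvingSet {V : Type*} (G : SimpleGraph V) (S : Set V) : Prop :=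
  ∀ u v : V, (∀ s ∈ S, G.dist u s = G.dist v s) → u = v

/-- for an atomic 0-distributive lattice with at least three atoms,
the complement of the zero-divisor graph has a finite resolving set iff it is a
finite graph. -/
theorem gc_finite_resolving_iff_finite
    (L : Type*) [Lattice L] [OrderBot L] [IsAtomic L]
    (h0dist : ∀ a b c : L, a ⊓ b = ⊥ → a ⊓ c = ⊥ → a ⊓ (b ⊔ c) = ⊥)
    (hatoms : ∃ a b c : L, IsAtom a ∧ IsAtom b ∧ IsAtom c ∧ a ≠ b ∧ a ≠ c ∧ b ≠ c) :
    (∃ S : Set (ZStar L), S.Finite ∧ IsResolvingSet (GcL L) S) ↔ Finite (ZStar L) := by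
  classical
  obtain ⟨a, b, c, ha, hb, hc, hab, hac, hbc⟩ := hatoms
  -- every atom is a vertex (a nonzero zero-divisor)
  have hmem : ∀ p : L, IsAtom p → (p ≠ ⊥ ∧ ∃ w : L, w ≠ ⊥ ∧ p ⊓ w = ⊥) := by
    intro p hp
    refine ⟨hp.1, ?_⟩
    by_cases h : p = a
    · exact ⟨b, hb.1, by rw [h]; exact disjoint_iff.1 (ha.disjoint_of_ne hb hab)⟩
    · exact ⟨a, ha.1, disjoint_iff.1 (hp.disjoint_of_ne ha h)⟩
  -- composing short walks
  have comp : ∀ {u v w : ZStar L} {m n : ℕ},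
      (∃ p : (GcL L).Walk u v, p.length ≤ m) → (∃ p : (GcL L).Walk v w, p.length ≤ n) →
      ∃ p : (GcL L).Walk u w, p.length ≤ m + n := by
    rintro u v w m n ⟨p, hp⟩ ⟨q, hq⟩
    exact ⟨p.append q, by rw [SimpleGraph.Walk.length_append]; omega⟩
  have step : ∀ {u v : ZStar L}, (u = v ∨ (GcL L).Adj u v) →
      ∃ p : (GcL L).Walk u v, p.length ≤ 1 := by
    rintro u v (rfl | h)
    · exact ⟨SimpleGraph.Walk.nil, by simp⟩
    · exact ⟨h.toWalk, by simp⟩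
  -- if q is an atom below u.1, then u is equal or adjacent to the vertex of q
  have stepatom : ∀ (u : ZStar L) (q : L) (hq' : IsAtom q), q ≤ u.1 →
      ∃ p : (GcL L).Walk u ⟨q, hmem q hq'⟩, p.length ≤ 1 := by
    intro u q hq' hle
    apply step
    by_cases h : u = ⟨q, hmem q hq'⟩
    · exact Or.inl h
    · exact Or.inr ⟨h, by rw [inf_eq_right.mpr hle]; exact hq'.1⟩
  -- between any two vertices there is a walk of length at most 4
  have key : ∀ u v : ZStar L, ∃ p : (GcL L).Walk u v, p.length ≤ 4 := by
    intro u v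
    obtain ⟨p, hp, hpu⟩ := (IsAtomic.eq_bot_or_exists_atom_le u.1).resolve_left u.2.1
    obtain ⟨q, hq, hqv⟩ := (IsAtomic.eq_bot_or_exists_atom_le v.1).resolve_left v.2.1
    by_cases hpq : p = q
    · subst hpq
      have w1 := stepatom u p hp hpu
      have w2 := stepatom v p hp hqv
      obtain ⟨w2', hw2'⟩ := w2
      obtain ⟨w, hw⟩ := comp w1 ⟨w2'.reverse, (SimpleGraph.Walk.length_reverse w2').le.trans hw2'⟩
      exact ⟨w, by omega⟩
    · -- pick a third atom r distinct from p and q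
      have hr : ∃ r, IsAtom r ∧ r ≠ p ∧ r ≠ q := by
        by_cases h1 : a ≠ p ∧ a ≠ q
        · exact ⟨a, ha, h1⟩
        by_cases h2 : b ≠ p ∧ b ≠ q
        · exact ⟨b, hb, h2⟩
        simp only [not_and_or, not_ne_iff] at h1 h2
        refine ⟨c, hc, fun h => ?_, fun h => ?_⟩
        · rcases h1 with h1 | h1
          · exact hac (h1.trans h.symm)
          · rcases h2 with h2 | h2
            · exact hbc (h2.trans h.symm)
            · exact hab (h1.trans h2.symm)
        · rcases h1 with h1 | h1
          · rcases h2 with h2 | h2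
            · exact hab (h1.trans h2.symm)
            · exact hbc (h2.trans h.symm)
          · exact hac (h1.trans h.symm)
      obtain ⟨r, hr', hrp, hrq⟩ := hr
      -- p ⊔ q is a vertex, witnessed by r
      have hM : (p ⊔ q ≠ ⊥ ∧ ∃ w : L, w ≠ ⊥ ∧ (p ⊔ q) ⊓ w = ⊥) := by
        refine ⟨fun h => hp.1 (le_bot_iff.mp (h ▸ le_sup_left)), r, hr'.1, ?_⟩
        rw [inf_comm]
        exact h0dist r p q (disjoint_iff.1 (hr'.disjoint_of_ne hp hrp)) (disjoint_iff.1 (hr'.disjoint_of_ne hq hrq))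
      set M : ZStar L := ⟨p ⊔ q, hM⟩ with hMdef
      set P : ZStar L := ⟨p, hmem p hp⟩ with hPdef
      set Q : ZStar L := ⟨q, hmem q hq⟩ with hQdef
      have hPM : (GcL L).Adj P M := by
        refine ⟨?_, ?_⟩
        · intro h
          have : p = p ⊔ q := congrArg Subtype.val h
          have hqp : q ≤ p := this ▸ le_sup_right
          rcases lt_or_eq_of_le hqp with h' | h'
          · exact hq.1 (hp.2 q h')
          · exact hpq h'.symm
        · show p ⊓ (p ⊔ q) ≠ ⊥
          rw [inf_eq_left.mpr le_sup_left]; exact hp.1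
      have hMQ : (GcL L).Adj M Q := by
        refine ⟨?_, ?_⟩
        · intro h
          have : p ⊔ q = q := congrArg Subtype.val h
          have hpq' : p ≤ q := this ▸ le_sup_left
          rcases lt_or_eq_of_le hpq' with h' | h'
          · exact hp.1 (hq.2 p h')
          · exact hpq h'
        · show (p ⊔ q) ⊓ q ≠ ⊥
          rw [inf_eq_right.mpr le_sup_right]; exact hq.1
      have w1 := stepatom u p hp hpu
      have w4' := stepatom v q hq hqv
      obtain ⟨w4, hw4⟩ := w4'
      have w23 := comp (step (Or.inr hPM)) (step (Or.inr hMQ))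
      have w123 := comp w1 w23
      obtain ⟨w, hw⟩ := comp w123 ⟨w4.reverse, by simpa using hw4⟩
      exact ⟨w, by omega⟩
  have distb : ∀ u v : ZStar L, (GcL L).dist u v ≤ 4 := fun u v =>
    (key u v).elim fun p hp => le_trans (SimpleGraph.dist_le p) hp
  have reach : ∀ u v : ZStar L, (GcL L).Reachable u v := fun u v =>
    (key u v).elim fun p _ => ⟨p⟩
  constructor
  · rintro ⟨S, hSfin, hSres⟩
    haveI := hSfin.to_subtype
    have inj : Function.Injective
        (fun v : ZStar L => fun s : S => (⟨(GcL L).dist v s, by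
          have := distb v s; omega⟩ : Fin 5)) := by
      intro u v h
      refine hSres u v fun s hs => ?_
      have := congrFun h ⟨s, hs⟩
      simpa [Fin.mk.injEq] using this
    exact Finite.of_injective _ inj
  · intro hfin
    refine ⟨Set.univ, Set.finite_univ, fun u v h => ?_⟩
    have h1 := h v (Set.mem_univ v)
    rw [SimpleGraph.dist_self] at h1
    exact ((reach u v).dist_eq_zero_iff).mp h1
end

section
/- Let L be an atomic 0-distributive lattice with least element 0 having at least three distinct atoms. Then the complement G^c(L) of the zero-divisor graph of L admits a finite strong resolving set (equivalently, the strong metric dimension sdim_M(G^c(L)) is finite) if and only if the vertex set Z*(L) is finite (i.e. G^c(L) is a finite graph). -/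
/-- `w` strongly resolves `u` and `v` in `G`. -/
def StronglyResolves {V : Type*} (G : SimpleGraph V) (w u v : V) : Prop :=
  G.dist u w = G.dist u v + G.dist v w ∨ G.dist v w = G.dist v u + G.dist u w

/-- A strong resolving set for `G`. -/
def IsStrongResolvingSet {V : Type*} (G : SimpleGraph V) (W : Set V) : Prop :=
  ∀ u v : V, u ≠ v → ∃ w ∈ W, StronglyResolves G w u v

section Aux
variable {L : Type*} [Lattice L] [OrderBot L] [IsAtomic L]

lemma atom_inf {a b : L} (ha : IsAtom a) (hb : IsAtom b) (hne : a ≠ b) : a ⊓ b = ⊥ :=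
  disjoint_iff.mp (ha.disjoint_of_ne hb hne)

/-- common neighbor lemma -/
lemma common_neighbor
    (h0dist : ∀ a b c : L, a ⊓ b = ⊥ → a ⊓ c = ⊥ → a ⊓ (b ⊔ c) = ⊥)
    (hatoms : ∃ a b c : L, IsAtom a ∧ IsAtom b ∧ IsAtom c ∧ a ≠ b ∧ a ≠ c ∧ b ≠ c)
    (x y : ZStar L) (hne : x ≠ y) (hxy : x.1 ⊓ y.1 = ⊥) :
    ∃ w : ZStar L, (GcL L).Adj x w ∧ (GcL L).Adj w y := by
  obtain ⟨a, b, c, ha, hb, hc, hab, hac, hbc⟩ := hatoms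
  obtain ⟨p, hp, hpx⟩ := (eq_bot_or_exists_atom_le x.1).resolve_left x.2.1
  obtain ⟨q, hq, hqy⟩ := (eq_bot_or_exists_atom_le y.1).resolve_left y.2.1
  have hpq : p ≠ q := by
    rintro rfl
    exact hp.1 (le_bot_iff.mp (hxy ▸ le_inf hpx hqy))
  -- pick r among a b c distinct from p and q
  obtain ⟨r, hr, hrp, hrq⟩ : ∃ r : L, IsAtom r ∧ r ≠ p ∧ r ≠ q := by
    by_cases hap : a = p
    · subst hap
      by_cases hbq : b = q
      · subst hbq
        exact ⟨c, hc, fun h => hac h.symm, fun h => hbc h.symm⟩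
      · exact ⟨b, hb, fun h => hab h.symm, hbq⟩
    · by_cases haq : a = q
      · subst haq
        by_cases hbp : b = p
        · subst hbp
          exact ⟨c, hc, fun h => hbc h.symm, fun h => hac h.symm⟩
        · exact ⟨b, hb, hbp, fun h => hab h.symm⟩
      · exact ⟨a, ha, hap, haq⟩
  have hrw : r ⊓ (p ⊔ q) = ⊥ := h0dist r p q (atom_inf hr hp hrp) (atom_inf hr hq hrq)
  have hwne : p ⊔ q ≠ ⊥ := fun h => hp.1 (le_bot_iff.mp (h ▸ le_sup_left))
  refine ⟨⟨p ⊔ q, hwne, r, hr.1, by rwa [inf_comm]⟩, ⟨?_, ?_⟩, ⟨?_, ?_⟩⟩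
  · rintro h
    have : q ≤ x.1 := by rw [h]; exact le_sup_right
    exact hq.1 (le_bot_iff.mp (hxy ▸ le_inf this hqy))
  · exact fun h => hp.1 (le_bot_iff.mp (le_trans (le_inf hpx le_sup_left) h.le))
  · rintro h
    have : p ≤ y.1 := by rw [← h]; exact le_sup_left
    exact hp.1 (le_bot_iff.mp (hxy ▸ le_inf hpx this))
  · exact fun h => hq.1 (le_bot_iff.mp (le_trans (le_inf (le_sup_right : q ≤ p ⊔ q) hqy) h.le))

lemma dist_facts {L : Type*} [Lattice L] [OrderBot L] [IsAtomic L]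
    (h0dist : ∀ a b c : L, a ⊓ b = ⊥ → a ⊓ c = ⊥ → a ⊓ (b ⊔ c) = ⊥)
    (hatoms : ∃ a b c : L, IsAtom a ∧ IsAtom b ∧ IsAtom c ∧ a ≠ b ∧ a ≠ c ∧ b ≠ c)
    (x y : ZStar L) (hne : x ≠ y) :
    1 ≤ (GcL L).dist x y ∧ (GcL L).dist x y ≤ 2 := by
  by_cases hadj : (GcL L).Adj x y
  · have := (SimpleGraph.dist_eq_one_iff_adj).mpr hadj
    omega
  · have hxy : x.1 ⊓ y.1 = ⊥ := by
      by_contra h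
      exact hadj ⟨hne, h⟩
    obtain ⟨w, h1, h2⟩ := common_neighbor h0dist hatoms x y hne hxy
    have hle : (GcL L).dist x y ≤ 2 :=
      SimpleGraph.dist_le (SimpleGraph.Walk.cons h1 (SimpleGraph.Walk.cons h2 SimpleGraph.Walk.nil))
    have hreach : (GcL L).Reachable x y := ⟨SimpleGraph.Walk.cons h1 (SimpleGraph.Walk.cons h2 SimpleGraph.Walk.nil)⟩
    have := hreach.pos_dist_of_ne hne
    omega

end Aux

/-- for an atomic 0-distributive lattice with at least three atoms,
the complement of the zero-divisor graph has a finite strong resolving set iff it is a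
finite graph. -/
theorem gc_finite_strong_resolving_iff_finite
    (L : Type*) [Lattice L] [OrderBot L] [IsAtomic L]
    (h0dist : ∀ a b c : L, a ⊓ b = ⊥ → a ⊓ c = ⊥ → a ⊓ (b ⊔ c) = ⊥)
    (hatoms : ∃ a b c : L, IsAtom a ∧ IsAtom b ∧ IsAtom c ∧ a ≠ b ∧ a ≠ c ∧ b ≠ c) :
    (∃ W : Set (ZStar L), W.Finite ∧ IsStrongResolvingSet (GcL L) W) ↔ Finite (ZStar L) := by
  constructor
  · rintro ⟨W, hWfin, hW⟩
    have hWc : (Wᶜ : Set (ZStar L)).Finite := by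
      have : Finite W := hWfin
      have hinj : Function.Injective
          (fun v : (Wᶜ : Set (ZStar L)) => {w : W | (GcL L).Adj v.1 w.1}) := by
        intro u v huv
        by_contra hne
        have hne' : u.1 ≠ v.1 := fun h => hne (Subtype.ext h)
        obtain ⟨w, hwW, hres⟩ := hW u.1 v.1 hne'
        have hwu : w ≠ u.1 := fun h => u.2 (h ▸ hwW)
        have hwv : w ≠ v.1 := fun h => v.2 (h ▸ hwW)
        have d1 := dist_facts h0dist hatoms u.1 v.1 hne'
        have d2 := dist_facts h0dist hatoms u.1 w (Ne.symm hwu)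
        have d3 := dist_facts h0dist hatoms v.1 w (Ne.symm hwv)
        have hcomm : (GcL L).dist v.1 u.1 = (GcL L).dist u.1 v.1 := SimpleGraph.dist_comm ..
        have hsame : (GcL L).Adj u.1 w ↔ (GcL L).Adj v.1 w := by
          have := congrArg (fun S => (⟨w, hwW⟩ : W) ∈ S) huv
          simpa using this
        rcases hres with h | h
        · have huw : (GcL L).dist u.1 w = 2 ∧ (GcL L).dist v.1 w = 1 := by omega
          have hadj : (GcL L).Adj v.1 w := SimpleGraph.dist_eq_one_iff_adj.mp huw.2
          have : (GcL L).dist u.1 w = 1 := SimpleGraph.dist_eq_one_iff_adj.mpr (hsame.mpr hadj)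
          omega
        · have huw : (GcL L).dist v.1 w = 2 ∧ (GcL L).dist u.1 w = 1 := by omega
          have hadj : (GcL L).Adj u.1 w := SimpleGraph.dist_eq_one_iff_adj.mp huw.2
          have : (GcL L).dist v.1 w = 1 := SimpleGraph.dist_eq_one_iff_adj.mpr (hsame.mp hadj)
          omega
      have : Finite (Set W) := by infer_instance
      have : Finite (Wᶜ : Set (ZStar L)) := Finite.of_injective _ hinj
      exact Set.toFinite _
    have : (Set.univ : Set (ZStar L)).Finite := by
      rw [← Set.union_compl_self W]
      exact hWfin.union hWc
    exact Set.finite_univ_iff.mp this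
  · intro h
    refine ⟨Set.univ, Set.finite_univ, fun u v huv => ⟨v, Set.mem_univ _, Or.inl ?_⟩⟩
    simp [SimpleGraph.dist_self]
end

section
/- Let L be an atomic 0-distributive lattice with least element 0 having at least three distinct atoms, and let t ≥ 1 be a natural number. Let H = G^c(L) ∨ K_t be the join of G^c(L) with the complete graph K_t, i.e. the simple graph on the disjoint union Z*(L) ⊕ {1,…,t} containing all edges of G^c(L), all edges between distinct elements of {1,…,t}, and all edges between the two parts. Then two distinct vertices u, v of H are mutually maximally distant in H if and only if either u, v both lie in Z*(L) and are mutually maximally distant in G^c(L), or u, v both lie in {1,…,t}. Equivalently, the strong resolving graph of H is the disjoint union of the strong resolving graph of G^c(L) and K_t: (G^c(L) ∨ K_t)_SR = (G^c(L))_SR + K_t. -/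
/-- `u` is maximally distant from `v` in `G`. -/
def MaxDistant {V : Type*} (G : SimpleGraph V) (u v : V) : Prop :=
  ∀ w : V, G.Adj u w → G.dist w v ≤ G.dist u v

/-- `u` and `v` are mutually maximally distant in `G`. -/
def MutuallyMaxDistant {V : Type*} (G : SimpleGraph V) (u v : V) : Prop :=
  MaxDistant G u v ∧ MaxDistant G v u

/-- The strong resolving graph of `G`. -/
def srGraph {V : Type*} (G : SimpleGraph V) : SimpleGraph V where
  Adj u v := u ≠ v ∧ MutuallyMaxDistant G u v
  symm := ⟨fun u v h => ⟨h.1.symm, h.2.2, h.2.1⟩⟩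
  loopless := ⟨fun u h => h.1 rfl⟩

/-- The join `G ∨ K_t` of a graph `G` with the complete graph on `t` vertices:
all edges of `G`, all edges inside `K_t`, and all edges between the two parts. -/
def joinKt {V : Type*} (G : SimpleGraph V) (t : ℕ) : SimpleGraph (V ⊕ Fin t) where
  Adj u v :=
    match u, v with
    | .inl a, .inl b => G.Adj a b
    | .inl _, .inr _ => True
    | .inr _, .inl _ => True
    | .inr i, .inr j => i ≠ j
  symm := by
    refine ⟨?_⟩
    rintro (a | i) (b | j) h
    · exact G.adj_symm h
    · trivial
    · trivial
    · exact Ne.symm h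
  loopless := by
    refine ⟨?_⟩
    rintro (a | i) h
    · exact G.irrefl h
    · exact h rfl

/-- The disjoint union of the strong resolving graph of `G` with the complete graph `K_t`. -/
def srSum {V : Type*} (G : SimpleGraph V) (t : ℕ) : SimpleGraph (V ⊕ Fin t) where
  Adj u v :=
    match u, v with
    | .inl a, .inl b => (srGraph G).Adj a b
    | .inr i, .inr j => i ≠ j
    | _, _ => False
  symm := by
    refine ⟨?_⟩
    rintro (a | i) (b | j) h
    · exact (srGraph G).adj_symm h
    · exact h.elim
    · exact h.elim
    · exact Ne.symm h
  loopless := by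
    refine ⟨?_⟩
    rintro (a | i) h
    · exact (srGraph G).irrefl h
    · exact h rfl

set_option linter.unusedSectionVars false

open SimpleGraph Sum

private lemma aux_dist_two {V : Type*} (G : SimpleGraph V) {u v z : V} (hne : u ≠ v)
    (hna : ¬G.Adj u v) (h1 : G.Adj u z) (h2 : G.Adj z v) : G.dist u v = 2 := by
  have hle : G.dist u v ≤ 2 := by
    simpa using G.dist_le (Walk.cons h1 (Walk.cons h2 Walk.nil))
  have h0 : G.dist u v ≠ 0 := by
    rw [SimpleGraph.dist_ne_zero_iff_ne_and_reachable]
    exact ⟨hne, ⟨Walk.cons h1 (Walk.cons h2 Walk.nil)⟩⟩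
  have h1' : G.dist u v ≠ 1 := fun h => hna (SimpleGraph.dist_eq_one_iff_adj.mp h)
  omega

section LatAux
variable {L : Type*} [Lattice L] [OrderBot L] [IsAtomic L]

private lemma atom_inf_eq_bot {p q : L} (hp : IsAtom p) (hq : IsAtom q) (hne : p ≠ q) :
    p ⊓ q = ⊥ := disjoint_iff.mp (hp.disjoint_of_ne hq hne)

private lemma atom_zstar
    (hatoms : ∃ a b c : L, IsAtom a ∧ IsAtom b ∧ IsAtom c ∧ a ≠ b ∧ a ≠ c ∧ b ≠ c)
    {p : L} (hp : IsAtom p) : p ≠ ⊥ ∧ ∃ b : L, b ≠ ⊥ ∧ p ⊓ b = ⊥ := by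
  obtain ⟨x, y, z, hx, hy, hz, hxy, hxz, hyz⟩ := hatoms
  by_cases h : p = x
  · exact ⟨hp.1, y, hy.1, atom_inf_eq_bot hp hy (h ▸ hxy)⟩
  · exact ⟨hp.1, x, hx.1, atom_inf_eq_bot hp hx h⟩

private lemma third_atom
    (hatoms : ∃ a b c : L, IsAtom a ∧ IsAtom b ∧ IsAtom c ∧ a ≠ b ∧ a ≠ c ∧ b ≠ c)
    (p q : L) : ∃ r : L, IsAtom r ∧ r ≠ p ∧ r ≠ q := by
  obtain ⟨x, y, z, hx, hy, hz, hxy, hxz, hyz⟩ := hatoms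
  by_cases hx' : x ≠ p ∧ x ≠ q
  · exact ⟨x, hx, hx'.1, hx'.2⟩
  by_cases hy' : y ≠ p ∧ y ≠ q
  · exact ⟨y, hy, hy'.1, hy'.2⟩
  by_cases hz' : z ≠ p ∧ z ≠ q
  · exact ⟨z, hz, hz'.1, hz'.2⟩
  exfalso
  push_neg at hx' hy' hz'
  have hx2 : x = p ∨ x = q := by
    by_cases h : x = p
    · exact Or.inl h
    · exact Or.inr (hx' h)
  have hy2 : y = p ∨ y = q := by
    by_cases h : y = p
    · exact Or.inl h
    · exact Or.inr (hy' h)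
  have hz2 : z = p ∨ z = q := by
    by_cases h : z = p
    · exact Or.inl h
    · exact Or.inr (hz' h)
  rcases hx2 with h1 | h1 <;> rcases hy2 with h2 | h2 <;> rcases hz2 with h3 | h3 <;>
    first
      | exact hxy (h1.trans h2.symm)
      | exact hxz (h1.trans h3.symm)
      | exact hyz (h2.trans h3.symm)

private lemma exists_nonadj
    (hatoms : ∃ a b c : L, IsAtom a ∧ IsAtom b ∧ IsAtom c ∧ a ≠ b ∧ a ≠ c ∧ b ≠ c)
    (b : ZStar L) : ∃ a : ZStar L, a ≠ b ∧ a.1 ⊓ b.1 = ⊥ := by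
  obtain ⟨hb0, c, hc0, hbc⟩ := b.2
  obtain ⟨p, hp, hpc⟩ := (eq_bot_or_exists_atom_le c).resolve_left hc0
  have hpb : p ⊓ b.1 = ⊥ := by
    have h1 : p ⊓ b.1 ≤ c ⊓ b.1 := inf_le_inf_right _ hpc
    have h2 : c ⊓ b.1 = ⊥ := by rw [inf_comm]; exact hbc
    exact le_bot_iff.mp (h1.trans (le_of_eq h2))
  refine ⟨⟨p, atom_zstar hatoms hp⟩, fun h => hp.1 ?_, hpb⟩
  have hpv : p = b.1 := congrArg Subtype.val h
  rw [← hpv] at hpb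
  simpa using hpb

private lemma common_nbr
    (h0dist : ∀ a b c : L, a ⊓ b = ⊥ → a ⊓ c = ⊥ → a ⊓ (b ⊔ c) = ⊥)
    (hatoms : ∃ a b c : L, IsAtom a ∧ IsAtom b ∧ IsAtom c ∧ a ≠ b ∧ a ≠ c ∧ b ≠ c)
    (a b : ZStar L) (hab : a.1 ⊓ b.1 = ⊥) :
    ∃ z : ZStar L, z ≠ a ∧ z ≠ b ∧ z.1 ⊓ a.1 ≠ ⊥ ∧ z.1 ⊓ b.1 ≠ ⊥ := by
  obtain ⟨p, hp, hpa⟩ := (eq_bot_or_exists_atom_le a.1).resolve_left a.2.1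
  obtain ⟨q, hq, hqb⟩ := (eq_bot_or_exists_atom_le b.1).resolve_left b.2.1
  obtain ⟨r, hr, hrp, hrq⟩ := third_atom hatoms p q
  have hz0 : p ⊔ q ≠ ⊥ := fun h => hp.1 (le_bot_iff.mp (h ▸ (le_sup_left : p ≤ p ⊔ q)))
  have hzr : (p ⊔ q) ⊓ r = ⊥ := by
    rw [inf_comm]
    exact h0dist r p q (atom_inf_eq_bot hr hp hrp) (atom_inf_eq_bot hr hq hrq)
  refine ⟨⟨p ⊔ q, hz0, r, hr.1, hzr⟩, ?_, ?_, ?_, ?_⟩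
  · intro h
    have hv : p ⊔ q = a.1 := congrArg Subtype.val h
    have h1 : q ≤ (p ⊔ q) ⊓ b.1 := le_inf le_sup_right hqb
    rw [hv, hab] at h1
    exact hq.1 (le_bot_iff.mp h1)
  · intro h
    have hv : p ⊔ q = b.1 := congrArg Subtype.val h
    have h1 : p ≤ a.1 ⊓ (p ⊔ q) := le_inf hpa le_sup_left
    rw [hv, hab] at h1
    exact hp.1 (le_bot_iff.mp h1)
  · exact fun h => hp.1 (le_bot_iff.mp (h ▸ (le_inf le_sup_left hpa)))
  · exact fun h => hq.1 (le_bot_iff.mp (h ▸ (le_inf le_sup_right hqb)))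

end LatAux

section JoinAux
variable {V : Type*} (G : SimpleGraph V) {t : ℕ}

private lemma joinKt_adj_inl_inr (a : V) (i : Fin t) : (joinKt G t).Adj (inl a) (inr i) :=
  trivial

private lemma joinKt_adj_inr_inl (i : Fin t) (a : V) : (joinKt G t).Adj (inr i) (inl a) :=
  trivial

private lemma joinKt_adj_inr_inr {i j : Fin t} (h : i ≠ j) :
    (joinKt G t).Adj (inr i) (inr j) := h

private lemma joinKt_adj_inl_inl {a b : V} : (joinKt G t).Adj (inl a) (inl b) ↔ G.Adj a b :=
  Iff.rfl

private lemma joinKt_reach (ht : 1 ≤ t) (u v : V ⊕ Fin t) : (joinKt G t).Reachable u v := by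
  have key : ∀ u : V ⊕ Fin t, (joinKt G t).Reachable u (inr ⟨0, ht⟩) := by
    rintro (a | i)
    · exact (joinKt_adj_inl_inr G a _).reachable
    · by_cases h : i = ⟨0, ht⟩
      · exact h ▸ Reachable.refl _
      · exact (joinKt_adj_inr_inr G h).reachable
  exact (key u).trans (key v).symm

private lemma joinKt_dist_two (ht : 1 ≤ t) {a b : V} (hne : a ≠ b) (hna : ¬G.Adj a b) :
    (joinKt G t).dist (inl a) (inl b) = 2 := by
  refine aux_dist_two _ (by simpa using hne) (fun h => hna h)
    (joinKt_adj_inl_inr G a ⟨0, ht⟩) (joinKt_adj_inr_inl G ⟨0, ht⟩ b)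

private lemma joinKt_dist_to_inr_le_one (w : V ⊕ Fin t) (j : Fin t) :
    (joinKt G t).dist w (inr j) ≤ 1 := by
  rcases w with a | k
  · exact le_of_eq (SimpleGraph.dist_eq_one_iff_adj.mpr (joinKt_adj_inl_inr G a j))
  · by_cases h : k = j
    · subst h
      rw [SimpleGraph.dist_self]
      omega
    · exact le_of_eq (SimpleGraph.dist_eq_one_iff_adj.mpr (joinKt_adj_inr_inr G h))

private lemma joinKt_dist_le_two (ht : 1 ≤ t) (u v : V ⊕ Fin t) :
    (joinKt G t).dist u v ≤ 2 := by
  rcases u with a | i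
  · rcases v with b | j
    · by_cases h : a = b
      · subst h
        rw [SimpleGraph.dist_self]
        omega
      by_cases hadj : G.Adj a b
      · exact le_trans (le_of_eq (SimpleGraph.dist_eq_one_iff_adj.mpr hadj)) one_le_two
      · exact le_of_eq (joinKt_dist_two G ht h hadj)
    · exact le_trans (joinKt_dist_to_inr_le_one G _ j) one_le_two
  · rcases v with b | j
    · exact le_trans (le_of_eq (SimpleGraph.dist_eq_one_iff_adj.mpr (joinKt_adj_inr_inl G i b)))
        one_le_two
    · exact le_trans (joinKt_dist_to_inr_le_one G _ j) one_le_two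

end JoinAux

section GclAux

variable {L : Type*} [Lattice L] [OrderBot L] [IsAtomic L]

private lemma gcl_dist_two
    (h0dist : ∀ a b c : L, a ⊓ b = ⊥ → a ⊓ c = ⊥ → a ⊓ (b ⊔ c) = ⊥)
    (hatoms : ∃ a b c : L, IsAtom a ∧ IsAtom b ∧ IsAtom c ∧ a ≠ b ∧ a ≠ c ∧ b ≠ c)
    {a b : ZStar L} (hne : a ≠ b) (hna : ¬(GcL L).Adj a b) : (GcL L).dist a b = 2 := by
  have hab : a.1 ⊓ b.1 = ⊥ := by
    by_contra h
    exact hna ⟨hne, h⟩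
  obtain ⟨z, hza, hzb, h1, h2⟩ := common_nbr h0dist hatoms a b hab
  exact aux_dist_two _ hne hna ⟨Ne.symm hza, by rw [inf_comm]; exact h1⟩ ⟨hzb, h2⟩

private lemma gcl_reach
    (h0dist : ∀ a b c : L, a ⊓ b = ⊥ → a ⊓ c = ⊥ → a ⊓ (b ⊔ c) = ⊥)
    (hatoms : ∃ a b c : L, IsAtom a ∧ IsAtom b ∧ IsAtom c ∧ a ≠ b ∧ a ≠ c ∧ b ≠ c)
    (a b : ZStar L) : (GcL L).Reachable a b := by
  by_cases h : a = b
  · exact h ▸ SimpleGraph.Reachable.refl a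
  by_cases hadj : (GcL L).Adj a b
  · exact hadj.reachable
  have hab : a.1 ⊓ b.1 = ⊥ := by
    by_contra h'
    exact hadj ⟨h, h'⟩
  obtain ⟨z, hza, hzb, h1, h2⟩ := common_nbr h0dist hatoms a b hab
  have haz : (GcL L).Adj a z := ⟨Ne.symm hza, by rw [inf_comm]; exact h1⟩
  have hzb' : (GcL L).Adj z b := ⟨hzb, h2⟩
  exact haz.reachable.trans hzb'.reachable

private lemma gcl_dist_le_one
    (h0dist : ∀ a b c : L, a ⊓ b = ⊥ → a ⊓ c = ⊥ → a ⊓ (b ⊔ c) = ⊥)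
    (hatoms : ∃ a b c : L, IsAtom a ∧ IsAtom b ∧ IsAtom c ∧ a ≠ b ∧ a ≠ c ∧ b ≠ c)
    {w b : ZStar L} : (GcL L).dist w b ≤ 1 ↔ (w = b ∨ (GcL L).Adj w b) := by
  constructor
  · intro h
    rcases Nat.le_one_iff_eq_zero_or_eq_one.mp h with h' | h'
    · exact Or.inl (((gcl_reach h0dist hatoms w b).dist_eq_zero_iff).mp h')
    · exact Or.inr (SimpleGraph.dist_eq_one_iff_adj.mp h')
  · rintro (rfl | h)
    · rw [SimpleGraph.dist_self]
      omega
    · exact le_of_eq (SimpleGraph.dist_eq_one_iff_adj.mpr h)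

private lemma gcl_dist_le_two
    (h0dist : ∀ a b c : L, a ⊓ b = ⊥ → a ⊓ c = ⊥ → a ⊓ (b ⊔ c) = ⊥)
    (hatoms : ∃ a b c : L, IsAtom a ∧ IsAtom b ∧ IsAtom c ∧ a ≠ b ∧ a ≠ c ∧ b ≠ c)
    (a b : ZStar L) : (GcL L).dist a b ≤ 2 := by
  by_cases h : a = b
  · subst h
    rw [SimpleGraph.dist_self]
    omega
  by_cases hadj : (GcL L).Adj a b
  · exact le_trans ((gcl_dist_le_one h0dist hatoms).mpr (Or.inr hadj)) one_le_two
  · exact le_of_eq (gcl_dist_two h0dist hatoms h hadj)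

end GclAux

/-- for an atomic 0-distributive lattice `L` with at least three atoms and
`t ≥ 1`, two distinct vertices of `G^c(L) ∨ K_t` are mutually maximally distant iff
they both lie in `Z*(L)` and are mutually maximally distant in `G^c(L)`, or both lie in
the `K_t` part; equivalently, `(G^c(L) ∨ K_t)_SR = (G^c(L))_SR + K_t`. -/
theorem srGraph_join_complete
    (L : Type*) [Lattice L] [OrderBot L] [IsAtomic L]
    (h0dist : ∀ a b c : L, a ⊓ b = ⊥ → a ⊓ c = ⊥ → a ⊓ (b ⊔ c) = ⊥)
    (hatoms : ∃ a b c : L, IsAtom a ∧ IsAtom b ∧ IsAtom c ∧ a ≠ b ∧ a ≠ c ∧ b ≠ c)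
    (t : ℕ) (ht : 1 ≤ t) :
    (∀ u v : ZStar L ⊕ Fin t, u ≠ v →
      (MutuallyMaxDistant (joinKt (GcL L) t) u v ↔
        ((∃ a b : ZStar L, u = .inl a ∧ v = .inl b ∧ MutuallyMaxDistant (GcL L) a b) ∨
          (∃ i j : Fin t, u = .inr i ∧ v = .inr j)))) ∧
    srGraph (joinKt (GcL L) t) = srSum (GcL L) t := by
  have maxd_iff : ∀ a b : ZStar L, (GcL L).Adj a b →
      (MaxDistant (joinKt (GcL L) t) (Sum.inl a) (Sum.inl b) ↔ MaxDistant (GcL L) a b) := by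
    intro a b hadj
    have hdH : (joinKt (GcL L) t).dist (Sum.inl a) (Sum.inl b) = 1 :=
      SimpleGraph.dist_eq_one_iff_adj.mpr hadj
    have hdG : (GcL L).dist a b = 1 := SimpleGraph.dist_eq_one_iff_adj.mpr hadj
    constructor
    · intro hmax w hw
      have h1 := hmax (Sum.inl w) hw
      rw [hdH] at h1
      rw [hdG]
      rcases Nat.le_one_iff_eq_zero_or_eq_one.mp h1 with h' | h'
      · have h2 : (Sum.inl w : ZStar L ⊕ Fin t) = Sum.inl b :=
          ((joinKt_reach (GcL L) ht _ _).dist_eq_zero_iff).mp h'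
        have h3 : w = b := by injection h2
        exact (gcl_dist_le_one h0dist hatoms).mpr (Or.inl h3)
      · exact (gcl_dist_le_one h0dist hatoms).mpr
          (Or.inr ((joinKt_adj_inl_inl (GcL L)).mp (SimpleGraph.dist_eq_one_iff_adj.mp h')))
    · intro hmax w hw
      rw [hdH]
      rcases w with c | i
      · have h1 : (GcL L).dist c b ≤ 1 := hdG ▸ hmax c hw
        rcases (gcl_dist_le_one h0dist hatoms).mp h1 with rfl | h'
        · rw [SimpleGraph.dist_self]
          omega
        · exact le_of_eq (SimpleGraph.dist_eq_one_iff_adj.mpr h')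
      · exact le_of_eq
          (SimpleGraph.dist_eq_one_iff_adj.mpr (joinKt_adj_inr_inl (GcL L) i b))
  have not_mixed : ∀ (i : Fin t) (b : ZStar L),
      ¬ MaxDistant (joinKt (GcL L) t) (Sum.inr i) (Sum.inl b) := by
    intro i b hmax
    obtain ⟨a, hab, hinf⟩ := exists_nonadj hatoms b
    have h1 := hmax (Sum.inl a) (joinKt_adj_inr_inl (GcL L) i a)
    have h2 : (joinKt (GcL L) t).dist (Sum.inr i) (Sum.inl b) = 1 :=
      SimpleGraph.dist_eq_one_iff_adj.mpr (joinKt_adj_inr_inl (GcL L) i b)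
    have h3 : (joinKt (GcL L) t).dist (Sum.inl a) (Sum.inl b) = 2 :=
      joinKt_dist_two (GcL L) ht hab (fun h => h.2 hinf)
    rw [h2, h3] at h1
    omega
  have main : ∀ u v : ZStar L ⊕ Fin t, u ≠ v →
      (MutuallyMaxDistant (joinKt (GcL L) t) u v ↔
        ((∃ a b : ZStar L, u = .inl a ∧ v = .inl b ∧ MutuallyMaxDistant (GcL L) a b) ∨
          (∃ i j : Fin t, u = .inr i ∧ v = .inr j))) := by
    intro u v huv
    rcases u with a | i <;> rcases v with b | j
    · have hab : a ≠ b := fun h => huv (by rw [h])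
      have hGH : MutuallyMaxDistant (joinKt (GcL L) t) (Sum.inl a) (Sum.inl b) ↔
          MutuallyMaxDistant (GcL L) a b := by
        by_cases hadj : (GcL L).Adj a b
        · exact ⟨fun h => ⟨(maxd_iff a b hadj).mp h.1, (maxd_iff b a hadj.symm).mp h.2⟩,
            fun h => ⟨(maxd_iff a b hadj).mpr h.1, (maxd_iff b a hadj.symm).mpr h.2⟩⟩
        · have hna' : ¬(GcL L).Adj b a := fun h => hadj h.symm
          constructor
          · intro _
            constructor
            · intro w _
              rw [gcl_dist_two h0dist hatoms hab hadj]
              exact gcl_dist_le_two h0dist hatoms w b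
            · intro w _
              rw [gcl_dist_two h0dist hatoms (Ne.symm hab) hna']
              exact gcl_dist_le_two h0dist hatoms w a
          · intro _
            constructor
            · intro w _
              rw [joinKt_dist_two (GcL L) ht hab hadj]
              exact joinKt_dist_le_two (GcL L) ht w (Sum.inl b)
            · intro w _
              rw [joinKt_dist_two (GcL L) ht (Ne.symm hab) hna']
              exact joinKt_dist_le_two (GcL L) ht w (Sum.inl a)
      constructor
      · intro h
        exact Or.inl ⟨a, b, rfl, rfl, hGH.mp h⟩
      · rintro (⟨a', b', h1, h2, h3⟩ | ⟨i, j, h1, h2⟩)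
        · injection h1 with h1
          injection h2 with h2
          subst h1
          subst h2
          exact hGH.mpr h3
        · exact absurd h1 (by simp)
    · constructor
      · rintro ⟨_, h2⟩
        exact absurd h2 (not_mixed j a)
      · rintro (⟨a', b', _, h2, _⟩ | ⟨i', j', h1, _⟩)
        · exact absurd h2 (by simp)
        · exact absurd h1 (by simp)
    · constructor
      · rintro ⟨h1, _⟩
        exact absurd h1 (not_mixed i b)
      · rintro (⟨a', b', h1, _, _⟩ | ⟨i', j', _, h2⟩)
        · exact absurd h1 (by simp)
        · exact absurd h2 (by simp)
    · have hij : i ≠ j := fun h => huv (by rw [h])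
      constructor
      · intro _
        exact Or.inr ⟨i, j, rfl, rfl⟩
      · intro _
        constructor
        · intro w _
          rw [SimpleGraph.dist_eq_one_iff_adj.mpr (joinKt_adj_inr_inr (GcL L) hij)]
          exact joinKt_dist_to_inr_le_one (GcL L) w j
        · intro w _
          rw [SimpleGraph.dist_eq_one_iff_adj.mpr (joinKt_adj_inr_inr (GcL L) (Ne.symm hij))]
          exact joinKt_dist_to_inr_le_one (GcL L) w i
  refine ⟨main, ?_⟩
  ext u v
  constructor
  · intro h
    have hne := h.1
    have hmmd := h.2
    rcases (main u v hne).mp hmmd with ⟨a, b, rfl, rfl, h'⟩ | ⟨i, j, rfl, rfl⟩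
    · exact (⟨fun h'' => hne (by rw [h'']), h'⟩ : (srGraph (GcL L)).Adj a b)
    · exact (fun h'' => hne (by rw [h'']) : i ≠ j)
  · intro h
    rcases u with a | i <;> rcases v with b | j
    · have h' : (srGraph (GcL L)).Adj a b := h
      have hne : (Sum.inl a : ZStar L ⊕ Fin t) ≠ Sum.inl b := fun hh => h'.1 (by injection hh)
      exact ⟨hne, (main _ _ hne).mpr (Or.inl ⟨a, b, rfl, rfl, h'.2⟩)⟩
    · exact (h : False).elim
    · exact (h : False).elim
    · have h' : i ≠ j := h
      have hne : (Sum.inr i : ZStar L ⊕ Fin t) ≠ Sum.inr j := fun hh => h' (by injection hh)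
      exact ⟨hne, (main _ _ hne).mpr (Or.inr ⟨i, j, rfl, rfl⟩)⟩
end

section
/- Let L be an atomic 0-distributive lattice with least element 0 having at least three distinct atoms. If x, y ∈ Z*(L) are distinct vertices of G^c(L) with equal annihilators x^⊥ = y^⊥, then x and y are mutually maximally distant in G^c(L) (hence adjacent in the strong resolving graph of G^c(L)). -/
/-- The annihilator of an element of a lattice with least element `⊥`. -/
def annih {L : Type*} [Lattice L] [OrderBot L] (x : L) : Set L :=
  {b : L | x ⊓ b = ⊥}

/-- in an atomic 0-distributive lattice with at least three atoms,
distinct vertices of `G^c(L)` with equal annihilators are mutually maximally distant. -/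
theorem mmd_of_eq_annihilator
    (L : Type*) [Lattice L] [OrderBot L] [IsAtomic L]
    (h0dist : ∀ a b c : L, a ⊓ b = ⊥ → a ⊓ c = ⊥ → a ⊓ (b ⊔ c) = ⊥)
    (hatoms : ∃ a b c : L, IsAtom a ∧ IsAtom b ∧ IsAtom c ∧ a ≠ b ∧ a ≠ c ∧ b ≠ c)
    (x y : ZStar L) (hxy : x ≠ y) (hann : annih x.1 = annih y.1) :
    MutuallyMaxDistant (GcL L) x y := by
  have hadj : (GcL L).Adj x y := by
    refine ⟨hxy, fun h => ?_⟩
    have hy : y.1 ∈ annih x.1 := h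
    rw [hann] at hy
    have : y.1 ⊓ y.1 = ⊥ := hy
    rw [inf_idem] at this
    exact y.2.1 this
  have hd1 : (GcL L).dist x y = 1 := (SimpleGraph.dist_eq_one_iff_adj).2 hadj
  have hd1' : (GcL L).dist y x = 1 := (SimpleGraph.dist_eq_one_iff_adj).2 hadj.symm
  constructor
  · intro w hw
    rw [hd1]
    by_cases hwy : w = y
    · subst hwy; simp [SimpleGraph.dist_self]
    · have hadjwy : (GcL L).Adj w y := by
        refine ⟨hwy, fun h => ?_⟩
        have : w.1 ∈ annih y.1 := by show y.1 ⊓ w.1 = ⊥; rwa [inf_comm]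
        rw [← hann] at this
        exact hw.2 this
      exact le_of_eq ((SimpleGraph.dist_eq_one_iff_adj).2 hadjwy)
  · intro w hw
    rw [hd1']
    by_cases hwx : w = x
    · subst hwx; simp [SimpleGraph.dist_self]
    · have hadjwx : (GcL L).Adj w x := by
        refine ⟨hwx, fun h => ?_⟩
        have : w.1 ∈ annih x.1 := by show x.1 ⊓ w.1 = ⊥; rwa [inf_comm]
        rw [hann] at this
        exact hw.2 this
      exact le_of_eq ((SimpleGraph.dist_eq_one_iff_adj).2 hadjwx)
end

section
/- Let n ≥ 3 and let 2^n be the Boolean lattice of all subsets of an n-element set. In the graph G^c(2^n), two distinct vertices s, t (nonempty proper subsets) are mutually maximally distant if and only if s ∩ t = ∅. Consequently, the strong resolving graph of G^c(2^n) equals the zero-divisor graph G(2^n). -/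
/-- Vertices of the (complement of the) zero-divisor graph of the Boolean lattice `2^n`:
the nonempty proper subsets of an `n`-element set. -/
def BVert (n : ℕ) : Type :=
  {s : Finset (Fin n) // s ≠ ∅ ∧ s ≠ Finset.univ}

/-- The complement `G^c(2^n)` of the zero-divisor graph of the Boolean lattice `2^n`:
distinct nonempty proper subsets are adjacent iff they intersect. -/
def GcB (n : ℕ) : SimpleGraph (BVert n) where
  Adj s t := s ≠ t ∧ s.1 ∩ t.1 ≠ ∅
  symm := ⟨fun s t h => ⟨h.1.symm, by rw [Finset.inter_comm]; exact h.2⟩⟩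
  loopless := ⟨fun s h => h.1 rfl⟩

/-- The zero-divisor graph `G(2^n)` of the Boolean lattice `2^n`:
distinct nonempty proper subsets are adjacent iff they are disjoint. -/
def GB (n : ℕ) : SimpleGraph (BVert n) where
  Adj s t := s ≠ t ∧ s.1 ∩ t.1 = ∅
  symm := ⟨fun s t h => ⟨h.1.symm, by rw [Finset.inter_comm]; exact h.2⟩⟩
  loopless := ⟨fun s h => (h.1 rfl).elim⟩

section Aux
variable {n : ℕ}

lemma bvert_nonempty (s : BVert n) : s.1.Nonempty := Finset.nonempty_of_ne_empty s.2.1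

lemma card_ne_univ (hn : 3 ≤ n) (w : Finset (Fin n)) (hw : w.card ≤ 2) :
    w ≠ Finset.univ := by
  intro h
  rw [h, Finset.card_univ, Fintype.card_fin] at hw
  omega

lemma dist_le_two (hn : 3 ≤ n) (s t : BVert n) (h : s ≠ t) : (GcB n).dist s t ≤ 2 := by
  by_cases hi : s.1 ∩ t.1 = ∅
  · obtain ⟨a, ha⟩ := bvert_nonempty s
    obtain ⟨b, hb⟩ := bvert_nonempty t
    have hat : a ∉ t.1 := fun hc => (Finset.eq_empty_iff_forall_notMem.1 hi a) (Finset.mem_inter.2 ⟨ha, hc⟩)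
    have hbs : b ∉ s.1 := fun hc => (Finset.eq_empty_iff_forall_notMem.1 hi b) (Finset.mem_inter.2 ⟨hc, hb⟩)
    set w : BVert n := ⟨{a, b}, by
      constructor
      · simp [Finset.insert_ne_empty]
      · exact card_ne_univ hn _ (le_trans (Finset.card_insert_le _ _) (by simp)) ⟩ with hw
    have h1 : (GcB n).Adj s w := by
      constructor
      · intro hc
        apply hbs; rw [hc]; simp [hw]
      · intro hc
        exact (Finset.eq_empty_iff_forall_notMem.1 hc a) (Finset.mem_inter.2 ⟨ha, by simp [hw]⟩)
    have h2 : (GcB n).Adj w t := by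
      constructor
      · intro hc
        apply hat; rw [← hc]; simp [hw]
      · intro hc
        exact (Finset.eq_empty_iff_forall_notMem.1 hc b) (Finset.mem_inter.2 ⟨by simp [hw], hb⟩)
    calc (GcB n).dist s t ≤ (SimpleGraph.Walk.cons h1 (SimpleGraph.Walk.cons h2 SimpleGraph.Walk.nil)).length :=
          SimpleGraph.dist_le _
      _ = 2 := rfl
  · have : (GcB n).Adj s t := ⟨h, hi⟩
    calc (GcB n).dist s t = 1 := SimpleGraph.dist_eq_one_iff_adj.2 this
      _ ≤ 2 := by omega

lemma reachable_of_ne (hn : 3 ≤ n) (s t : BVert n) (h : s ≠ t) : (GcB n).Reachable s t := by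
  by_cases hi : s.1 ∩ t.1 = ∅
  · obtain ⟨a, ha⟩ := bvert_nonempty s
    obtain ⟨b, hb⟩ := bvert_nonempty t
    have hat : a ∉ t.1 := fun hc => (Finset.eq_empty_iff_forall_notMem.1 hi a) (Finset.mem_inter.2 ⟨ha, hc⟩)
    have hbs : b ∉ s.1 := fun hc => (Finset.eq_empty_iff_forall_notMem.1 hi b) (Finset.mem_inter.2 ⟨hc, hb⟩)
    set w : BVert n := ⟨{a, b}, by
      constructor
      · simp [Finset.insert_ne_empty]
      · exact card_ne_univ hn _ (le_trans (Finset.card_insert_le _ _) (by simp)) ⟩ with hw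
    have h1 : (GcB n).Adj s w := by
      constructor
      · intro hc
        apply hbs; rw [hc]; simp [hw]
      · intro hc
        exact (Finset.eq_empty_iff_forall_notMem.1 hc a) (Finset.mem_inter.2 ⟨ha, by simp [hw]⟩)
    have h2 : (GcB n).Adj w t := by
      constructor
      · intro hc
        apply hat; rw [← hc]; simp [hw]
      · intro hc
        exact (Finset.eq_empty_iff_forall_notMem.1 hc b) (Finset.mem_inter.2 ⟨by simp [hw], hb⟩)
    exact (h1.reachable).trans h2.reachable
  · exact SimpleGraph.Adj.reachable ⟨h, hi⟩

lemma dist_eq_two (hn : 3 ≤ n) (s t : BVert n) (h : s ≠ t) (hi : s.1 ∩ t.1 = ∅) :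
    (GcB n).dist s t = 2 := by
  have h2 := dist_le_two hn s t h
  have h0 : (GcB n).dist s t ≠ 0 := by
    intro hc
    -- dist = 0 with reachable means s = t
    exact h ((reachable_of_ne hn s t h).dist_eq_zero_iff.mp hc)
  have h1 : (GcB n).dist s t ≠ 1 := fun hc => (SimpleGraph.dist_eq_one_iff_adj.1 hc).2 hi
  omega

end Aux

lemma mmd_iff (n : ℕ) (hn : 3 ≤ n) (s t : BVert n) (hst : s ≠ t) :
    MutuallyMaxDistant (GcB n) s t ↔ s.1 ∩ t.1 = ∅ := by
  constructor
  · intro ⟨H1, H2⟩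
    by_contra hi
    have hd : (GcB n).dist s t = 1 := SimpleGraph.dist_eq_one_iff_adj.2 ⟨hst, hi⟩
    have hd' : (GcB n).dist t s = 1 := SimpleGraph.dist_eq_one_iff_adj.2
      ⟨hst.symm, by rwa [Finset.inter_comm]⟩
    obtain ⟨b, hb⟩ := Finset.nonempty_of_ne_empty hi
    have hbs : b ∈ s.1 := (Finset.mem_inter.1 hb).1
    have hbt : b ∈ t.1 := (Finset.mem_inter.1 hb).2
    by_cases hsub : s.1 ⊆ t.1
    · -- use a neighbor of t disjoint from s
      have hne : (t.1 \ s.1).Nonempty := by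
        rw [Finset.sdiff_nonempty]
        intro hts
        exact hst (Subtype.ext (Finset.Subset.antisymm hsub hts))
      obtain ⟨a, ha⟩ := hne
      have hat : a ∈ t.1 := (Finset.mem_sdiff.1 ha).1
      have has : a ∉ s.1 := (Finset.mem_sdiff.1 ha).2
      set w : BVert n := ⟨{a}, Finset.singleton_ne_empty a,
        card_ne_univ hn _ (by simp)⟩ with hw
      have hadj : (GcB n).Adj t w := by
        refine ⟨?_, ?_⟩
        · intro hc
          apply has
          have : b ∈ w.1 := by rw [← hc]; exact hbt
          simp only [hw] at this
          rw [Finset.mem_singleton] at this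
          rwa [this] at hbs
        · intro hc
          exact (Finset.eq_empty_iff_forall_notMem.1 hc a)
            (Finset.mem_inter.2 ⟨hat, by simp [hw]⟩)
      have hws : w ≠ s := by
        intro hc
        apply has; rw [← hc]; simp [hw]
      have hdw : (GcB n).dist w s = 2 := by
        apply dist_eq_two hn w s hws
        simp [hw, Finset.singleton_inter_of_notMem has]
      have := H2 w hadj
      rw [hdw, hd'] at this
      omega
    · obtain ⟨a, hat', has'⟩ := Finset.not_subset.1 hsub
      set w : BVert n := ⟨{a}, Finset.singleton_ne_empty a,
        card_ne_univ hn _ (by simp)⟩ with hw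
      have hadj : (GcB n).Adj s w := by
        refine ⟨?_, ?_⟩
        · intro hc
          apply has'
          have : b ∈ w.1 := by rw [← hc]; exact hbs
          simp only [hw] at this
          rw [Finset.mem_singleton] at this
          rwa [this] at hbt
        · intro hc
          exact (Finset.eq_empty_iff_forall_notMem.1 hc a)
            (Finset.mem_inter.2 ⟨hat', by simp [hw]⟩)
      have hwt : w ≠ t := by
        intro hc
        apply has'; rw [← hc]; simp [hw]
      have hdw : (GcB n).dist w t = 2 := by
        apply dist_eq_two hn w t hwt
        simp [hw, Finset.singleton_inter_of_notMem has']
      have := H1 w hadj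
      rw [hdw, hd] at this
      omega
  · intro hi
    have hd : (GcB n).dist s t = 2 := dist_eq_two hn s t hst hi
    have hd' : (GcB n).dist t s = 2 := dist_eq_two hn t s hst.symm (by rwa [Finset.inter_comm])
    constructor
    · intro w hw
      rw [hd]
      by_cases hwt : w = t
      · subst hwt; rw [SimpleGraph.dist_self]; omega
      · exact dist_le_two hn w t hwt
    · intro w hw
      rw [hd']
      by_cases hws : w = s
      · subst hws; rw [SimpleGraph.dist_self]; omega
      · exact dist_le_two hn w s hws


/-- for `n ≥ 3`, distinct vertices of `G^c(2^n)` are mutually maximally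
distant iff they are disjoint; consequently the strong resolving graph of `G^c(2^n)`
equals the zero-divisor graph `G(2^n)`. -/
theorem srGraph_gc_boolean (n : ℕ) (hn : 3 ≤ n) :
    (∀ s t : BVert n, s ≠ t →
      (MutuallyMaxDistant (GcB n) s t ↔ s.1 ∩ t.1 = ∅)) ∧
    srGraph (GcB n) = GB n := by
  refine ⟨fun s t hst => mmd_iff n hn s t hst, ?_⟩
  ext s t
  show (s ≠ t ∧ MutuallyMaxDistant (GcB n) s t) ↔ (s ≠ t ∧ s.1 ∩ t.1 = ∅)
  constructor
  · rintro ⟨h1, h2⟩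
    exact ⟨h1, (mmd_iff n hn s t h1).mp h2⟩
  · rintro ⟨h1, h2⟩
    exact ⟨h1, (mmd_iff n hn s t h1).mpr h2⟩
end

section
/- Let n ≥ 3 and let 2^n be the Boolean lattice of all subsets of an n-element set. Then the strong resolving graph of G^c(2^n) is a connected graph of diameter at most 3. -/
namespace SRaux

variable {n : ℕ}

/-- The complement vertex. -/
def cpl (s : BVert n) : BVert n :=
  ⟨s.1ᶜ, by
    constructor
    · simpa [Finset.eq_univ_iff_forall, Finset.eq_empty_iff_forall_notMem] using s.2.2
    · simpa [Finset.eq_univ_iff_forall, Finset.eq_empty_iff_forall_notMem,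
        Finset.mem_compl] using s.2.1⟩

lemma walk2 (hn : 3 ≤ n) (u v : BVert n) :
    ∃ p : (GcB n).Walk u v, p.length ≤ 2 := by
  rcases eq_or_ne u v with rfl | huv
  · exact ⟨SimpleGraph.Walk.nil, by simp⟩
  rcases eq_or_ne (u.1 ∩ v.1) ∅ with hdisj | hint
  · obtain ⟨x, hx⟩ := Finset.nonempty_iff_ne_empty.2 u.2.1
    obtain ⟨y, hy⟩ := Finset.nonempty_iff_ne_empty.2 v.2.1
    have hwne : ({x, y} : Finset (Fin n)) ≠ Finset.univ := by
      intro h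
      have : (Finset.univ : Finset (Fin n)).card ≤ 2 := by
        rw [← h]; exact (Finset.card_insert_le _ _).trans (by simp)
      simp [Finset.card_univ] at this; omega
    set w : BVert n := ⟨{x, y}, by simp, hwne⟩ with hwdef
    have hxy : x ∉ v.1 := fun hxv =>
      absurd (Finset.eq_empty_iff_forall_notMem.1 hdisj x) (by simp [hx, hxv])
    have hyu : y ∉ u.1 := fun hyu =>
      absurd (Finset.eq_empty_iff_forall_notMem.1 hdisj y) (by simp [hyu, hy])
    have h1 : (GcB n).Adj u w := by
      refine ⟨fun h => hyu ?_, fun h =>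
        absurd (Finset.eq_empty_iff_forall_notMem.1 h x) (by simp [hwdef, hx])⟩
      rw [h]; simp [hwdef]
    have h2 : (GcB n).Adj w v := by
      refine ⟨fun h => hxy ?_, fun h =>
        absurd (Finset.eq_empty_iff_forall_notMem.1 h y) (by simp [hwdef, hy])⟩
      rw [← h]; simp [hwdef]
    exact ⟨h1.toWalk.append h2.toWalk, by simp⟩
  · exact ⟨(SimpleGraph.Adj.toWalk ⟨huv, hint⟩), by show 1 ≤ 2; omega⟩

lemma diam2 (hn : 3 ≤ n) (u v : BVert n) : (GcB n).dist u v ≤ 2 := by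
  obtain ⟨p, hp⟩ := walk2 hn u v
  exact (SimpleGraph.dist_le p).trans hp

lemma two_le_dist (hn : 3 ≤ n) (u v : BVert n) (huv : u ≠ v)
    (hdisj : u.1 ∩ v.1 = ∅) : 2 ≤ (GcB n).dist u v := by
  have hr : (GcB n).Reachable u v := (walk2 hn u v).choose.reachable
  have hne0 : (GcB n).dist u v ≠ 0 := (hr.pos_dist_of_ne huv).ne'
  have hne1 : (GcB n).dist u v ≠ 1 := fun h =>
    (SimpleGraph.dist_eq_one_iff_adj.1 h).2 hdisj
  omega

lemma sr_adj_of_disjoint (hn : 3 ≤ n) (u v : BVert n) (huv : u ≠ v)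
    (hdisj : u.1 ∩ v.1 = ∅) : (srGraph (GcB n)).Adj u v := by
  have hmax : ∀ a b : BVert n, a ≠ b → a.1 ∩ b.1 = ∅ → MaxDistant (GcB n) a b := by
    intro a b hne hab w _
    exact (diam2 hn w b).trans (two_le_dist hn a b hne hab)
  exact ⟨huv, hmax u v huv hdisj,
    hmax v u huv.symm (by rw [Finset.inter_comm]; exact hdisj)⟩

lemma sr_walk3 (hn : 3 ≤ n) (u v : BVert n) :
    ∃ p : (srGraph (GcB n)).Walk u v, p.length ≤ 3 := by
  rcases eq_or_ne u v with rfl | huv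
  · exact ⟨SimpleGraph.Walk.nil, by simp⟩
  rcases eq_or_ne (u.1 ∩ v.1) ∅ with hdisj | hint
  · exact ⟨(sr_adj_of_disjoint hn u v huv hdisj).toWalk, by simp⟩
  rcases eq_or_ne (u.1 ∪ v.1) Finset.univ with huni | huni
  · -- path u - uᶜ - vᶜ - v
    have hcne : cpl u ≠ cpl v := by
      intro h
      apply huv
      have : u.1ᶜ = v.1ᶜ := congrArg Subtype.val h
      exact Subtype.ext (by simpa using congrArg (·ᶜ) this)
    have h1 : (srGraph (GcB n)).Adj u (cpl u) := by
      refine sr_adj_of_disjoint hn _ _ (fun h => ?_) (by simp [cpl])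
      have : u.1 = u.1ᶜ := congrArg Subtype.val h
      obtain ⟨x, hx⟩ := Finset.nonempty_iff_ne_empty.2 u.2.1
      have := this ▸ hx
      simp [hx] at this
    have h2 : (srGraph (GcB n)).Adj (cpl u) (cpl v) := by
      refine sr_adj_of_disjoint hn _ _ hcne ?_
      show u.1ᶜ ∩ v.1ᶜ = ∅
      rw [← Finset.compl_union, huni, Finset.compl_univ]
    have h3 : (srGraph (GcB n)).Adj (cpl v) v := by
      refine sr_adj_of_disjoint hn _ _ (fun h => ?_) (by simp [cpl, Finset.inter_comm])
      have : v.1ᶜ = v.1 := congrArg Subtype.val h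
      obtain ⟨x, hx⟩ := Finset.nonempty_iff_ne_empty.2 v.2.1
      have := this ▸ hx
      simp [hx] at this
    exact ⟨(h1.toWalk.append h2.toWalk).append h3.toWalk, by simp⟩
  · -- path u - (u∪v)ᶜ - v
    have hwne : (u.1 ∪ v.1)ᶜ ≠ (∅ : Finset (Fin n)) := by
      simpa [Finset.eq_univ_iff_forall, Finset.eq_empty_iff_forall_notMem,
        Finset.mem_compl] using huni
    have hwnu : (u.1 ∪ v.1)ᶜ ≠ (Finset.univ : Finset (Fin n)) := by
      intro h
      obtain ⟨x, hx⟩ := Finset.nonempty_iff_ne_empty.2 u.2.1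
      have := (Finset.eq_univ_iff_forall.1 h) x
      simp [hx] at this
    set w : BVert n := ⟨(u.1 ∪ v.1)ᶜ, hwne, hwnu⟩ with hwdef
    have hdu : u.1 ∩ w.1 = ∅ := by
      rw [hwdef]
      ext x; simp (config := {contextual := true})
    have hdv : w.1 ∩ v.1 = ∅ := by
      rw [hwdef]
      ext x; simp (config := {contextual := true})
    have hwu : u ≠ w := fun h =>
      u.2.1 (by rw [← h, Finset.inter_self] at hdu; exact hdu)
    have hwv : w ≠ v := fun h =>
      v.2.1 (by rw [h, Finset.inter_self] at hdv; exact hdv)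
    have h1 := sr_adj_of_disjoint hn u w hwu hdu
    have h2 := sr_adj_of_disjoint hn w v hwv hdv
    exact ⟨h1.toWalk.append h2.toWalk, by simp⟩

end SRaux

/-- for `n ≥ 3`, the strong resolving graph of `G^c(2^n)` is connected
with diameter at most `3`. -/
theorem srGraph_gc_boolean_connected (n : ℕ) (hn : 3 ≤ n) :
    (srGraph (GcB n)).Connected ∧
    ∀ u v : BVert n, (srGraph (GcB n)).dist u v ≤ 3 := by
  have hw := SRaux.sr_walk3 hn
  have hne : Nonempty (BVert n) := by
    refine ⟨⟨{⟨0, by omega⟩}, by simp, fun h => ?_⟩⟩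
    have h1 := (Finset.eq_univ_iff_forall.1 h) ⟨1, by omega⟩
    rw [Finset.mem_singleton] at h1
    exact absurd (congrArg Fin.val h1) (by simp)
  constructor
  · exact SimpleGraph.Connected.mk (fun u v => (hw u v).choose.reachable)
  · intro u v
    obtain ⟨p, hp⟩ := hw u v
    exact (SimpleGraph.dist_le p).trans hp
end

section
/- Let n ≥ 3 and let 2^n be the Boolean lattice of all subsets of an n-element set. Then the independence number of the strong resolving graph of G^c(2^n) equals 2^{n-1} − 1. -/
/-- The independence number of a graph: the maximum cardinality of a set of pairwise
non-adjacent vertices. -/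
noncomputable def indepNum {V : Type*} (G : SimpleGraph V) : ℕ :=
  sSup {k | ∃ S : Set V, S.Finite ∧ S.Pairwise (fun u v => ¬ G.Adj u v) ∧ Nat.card S = k}

instance (n : ℕ) : Fintype (BVert n) := by unfold BVert; infer_instance
instance (n : ℕ) : DecidableEq (BVert n) := by unfold BVert; infer_instance

lemma BVert.ext {n : ℕ} {u v : BVert n} (h : u.1 = v.1) : u = v := Subtype.ext h

lemma card_filter_mem' {α : Type*} [Fintype α] [DecidableEq α] (a : α) :
    ((Finset.univ : Finset (Finset α)).filter (fun s => a ∈ s)).card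
      = 2 ^ (Fintype.card α - 1) := by
  have : ((Finset.univ : Finset α).erase a).powerset.card = 2 ^ (Fintype.card α - 1) := by
    rw [Finset.card_powerset, Finset.card_erase_of_mem (Finset.mem_univ a), Finset.card_univ]
  rw [← this]
  refine Finset.card_bij' (fun s _ => s.erase a) (fun t _ => insert a t) ?_ ?_ ?_ ?_
  · intro s hs
    simp only [Finset.mem_powerset]
    exact Finset.erase_subset_erase a (Finset.subset_univ s)
  · intro t ht
    simp only [Finset.mem_filter, Finset.mem_univ, true_and]
    exact Finset.mem_insert_self a t
  · intro s hs
    simp only [Finset.mem_filter, Finset.mem_univ, true_and] at hs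
    exact Finset.insert_erase hs
  · intro t ht
    simp only [Finset.mem_powerset] at ht
    refine Finset.erase_insert ?_
    intro h
    exact (Finset.mem_erase.1 (ht h)).1 rfl

section Graph

variable {n : ℕ} (hn : 3 ≤ n)

include hn

lemma singleton_ne_univ (x : Fin n) : ({x} : Finset (Fin n)) ≠ Finset.univ := by
  intro h
  have := congrArg Finset.card h
  simp [Finset.card_univ] at this
  omega

lemma gc_walk (a b : BVert n) : (GcB n).Reachable a b ∧ (GcB n).dist a b ≤ 2 := by
  by_cases hab : a = b
  · subst hab; exact ⟨SimpleGraph.Reachable.refl a, by rw [SimpleGraph.dist_self]; omega⟩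
  by_cases hi : a.1 ∩ b.1 ≠ ∅
  · have hadj : (GcB n).Adj a b := ⟨hab, hi⟩
    refine ⟨⟨SimpleGraph.Walk.cons hadj .nil⟩, ?_⟩
    calc (GcB n).dist a b ≤ (SimpleGraph.Walk.cons hadj .nil).length := SimpleGraph.dist_le _
    _ ≤ 2 := by norm_num
  · push_neg at hi
    obtain ⟨x, hx⟩ := Finset.nonempty_iff_ne_empty.2 a.2.1
    obtain ⟨y, hy⟩ := Finset.nonempty_iff_ne_empty.2 b.2.1
    have hcu : ({x, y} : Finset (Fin n)) ≠ Finset.univ := by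
      intro h
      have h2 : ({x, y} : Finset (Fin n)).card ≤ 2 := Finset.card_insert_le _ _ |>.trans (by simp)
      rw [h] at h2
      simp [Finset.card_univ] at h2
      omega
    set c : BVert n := ⟨{x, y}, by simp, hcu⟩ with hc
    have hac : (GcB n).Adj a c := by
      refine ⟨?_, ?_⟩
      · intro h
        have : y ∈ a.1 := by rw [h]; simp [hc]
        exact absurd (Finset.mem_inter.2 ⟨this, hy⟩) (by simp [hi])
      · intro h
        have : x ∈ a.1 ∩ c.1 := Finset.mem_inter.2 ⟨hx, by simp [hc]⟩
        simp [h] at this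
    have hcb : (GcB n).Adj c b := by
      refine ⟨?_, ?_⟩
      · intro h
        have : x ∈ b.1 := by rw [← h]; simp [hc]
        exact absurd (Finset.mem_inter.2 ⟨hx, this⟩) (by simp [hi])
      · intro h
        have : y ∈ c.1 ∩ b.1 := Finset.mem_inter.2 ⟨by simp [hc], hy⟩
        simp [h] at this
    refine ⟨⟨SimpleGraph.Walk.cons hac (SimpleGraph.Walk.cons hcb .nil)⟩, ?_⟩
    calc (GcB n).dist a b ≤ (SimpleGraph.Walk.cons hac (SimpleGraph.Walk.cons hcb .nil)).length :=
        SimpleGraph.dist_le _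
    _ = 2 := rfl

lemma gc_dist_two {a b : BVert n} (hab : a ≠ b) (hd : a.1 ∩ b.1 = ∅) :
    (GcB n).dist a b = 2 := by
  have h1 : 0 < (GcB n).dist a b := ((gc_walk hn a b).1).pos_dist_of_ne hab
  have h2 : (GcB n).dist a b ≠ 1 := by
    intro h
    have : (GcB n).Adj a b := SimpleGraph.dist_eq_one_iff_adj.1 h
    exact this.2 hd
  have h3 := (gc_walk hn a b).2
  omega

lemma not_maxdistant {u v : BVert n} (hne : u ≠ v) (hi : u.1 ∩ v.1 ≠ ∅)
    {x : Fin n} (hxu : x ∈ u.1) (hxv : x ∉ v.1) : ¬ MaxDistant (GcB n) u v := by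
  intro hmax
  have hwne : ({x} : Finset (Fin n)) ≠ ∅ := by simp
  set w : BVert n := ⟨{x}, hwne, singleton_ne_univ hn x⟩ with hw
  have huw : (GcB n).Adj u w := by
    refine ⟨?_, ?_⟩
    · intro h
      have : u.1 = {x} := congrArg Subtype.val h
      rw [this] at hi
      rw [Finset.singleton_inter_of_notMem hxv] at hi
      exact hi rfl
    · intro h
      have : x ∈ u.1 ∩ w.1 := Finset.mem_inter.2 ⟨hxu, by simp [hw]⟩
      simp [h] at this
  have hduv : (GcB n).dist u v = 1 := SimpleGraph.dist_eq_one_iff_adj.2 ⟨hne, hi⟩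
  have hwv : w ≠ v := by
    intro h
    exact hxv (h ▸ (by simp [hw] : x ∈ w.1))
  have hd : w.1 ∩ v.1 = ∅ := by
    simp only [hw]
    exact Finset.singleton_inter_of_notMem hxv
  have := gc_dist_two hn hwv hd
  have := hmax w huw
  omega

lemma sr_adj_iff (u v : BVert n) :
    (srGraph (GcB n)).Adj u v ↔ u ≠ v ∧ u.1 ∩ v.1 = ∅ := by
  constructor
  · rintro ⟨hne, hmmd⟩
    refine ⟨hne, ?_⟩
    by_contra hi
    have huv : u.1 ≠ v.1 := fun h => hne (Subtype.ext h)
    by_cases hsub : u.1 ⊆ v.1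
    · obtain ⟨x, hxv, hxu⟩ := Finset.not_subset.1
        (fun h' => huv (Finset.Subset.antisymm hsub h'))
      exact not_maxdistant hn (Ne.symm hne)
        (by rw [Finset.inter_comm]; exact hi) hxv hxu hmmd.2
    · obtain ⟨x, hxu, hxv⟩ := Finset.not_subset.1 hsub
      exact not_maxdistant hn hne hi hxu hxv hmmd.1
  · rintro ⟨hne, hd⟩
    refine ⟨hne, ?_, ?_⟩
    · intro w _
      have := (gc_walk hn w v).2
      rw [gc_dist_two hn hne hd]
      omega
    · intro w _
      have := (gc_walk hn w u).2
      rw [gc_dist_two hn (Ne.symm hne) (by rw [Finset.inter_comm]; exact hd)]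
      omega

end Graph

lemma card_target {n : ℕ} (hn : 3 ≤ n) (a : Fin n) :
    Fintype.card {t : Finset (Fin n) // a ∈ t ∧ t ≠ Finset.univ}
      = 2 ^ (n - 1) - 1 := by
  rw [Fintype.card_subtype]
  have he : (Finset.univ.filter (fun t : Finset (Fin n) => a ∈ t ∧ t ≠ Finset.univ))
      = (Finset.univ.filter (fun t : Finset (Fin n) => a ∈ t)).erase Finset.univ := by
    ext t
    simp only [Finset.mem_filter, Finset.mem_univ, true_and, Finset.mem_erase]
    tauto
  rw [he, Finset.card_erase_of_mem (by simp), card_filter_mem' a, Fintype.card_fin]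

lemma upper_bound {n : ℕ} (hn : 3 ≤ n) {S : Set (BVert n)} (hS : S.Finite)
    (hP : S.Pairwise (fun u v => ¬ (srGraph (GcB n)).Adj u v)) :
    Nat.card S ≤ 2 ^ (n - 1) - 1 := by
  classical
  set a : Fin n := ⟨0, by omega⟩ with ha
  have hinter : ∀ u ∈ S, ∀ v ∈ S, u ≠ v → u.1 ∩ v.1 ≠ ∅ := by
    intro u hu v hv huv h
    exact hP hu hv huv ((sr_adj_iff hn u v).2 ⟨huv, h⟩)
  set T := {t : Finset (Fin n) // a ∈ t ∧ t ≠ Finset.univ} with hT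
  have : ∃ f : S → T, Function.Injective f := by
    refine ⟨fun s => if h : a ∈ s.1.1 then ⟨s.1.1, h, s.1.2.2⟩
      else ⟨s.1.1ᶜ, Finset.mem_compl.2 h, ?_⟩, ?_⟩
    · intro hc
      apply s.1.2.1
      have := congrArg (fun t => tᶜ) hc
      simpa using this
    · intro s t hst
      by_cases hne : s = t
      · exact hne
      have hstv : (s : BVert n) ≠ (t : BVert n) := fun h => hne (Subtype.ext h)
      have hint := hinter s.1 s.2 t.1 t.2 hstv
      exfalso
      by_cases h1 : a ∈ s.1.1 <;> by_cases h2 : a ∈ t.1.1 <;>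
        simp only [h1, h2, dif_pos, dif_neg, not_false_iff] at hst <;>
        have hval := congrArg Subtype.val hst
      · exact hstv (Subtype.ext hval)
      · apply hint
        rw [show (s : BVert n).1 = (t : BVert n).1ᶜ from hval]
        ext x; simp
      · apply hint
        rw [← show (s : BVert n).1ᶜ = (t : BVert n).1 from hval, Finset.inter_comm]
        ext x; simp
      · have h3 : (s : BVert n).1 = (t : BVert n).1 := by
          have := congrArg (fun t => tᶜ) hval
          simpa using this
        exact hstv (Subtype.ext h3)
  obtain ⟨f, hf⟩ := this
  calc Nat.card S ≤ Nat.card T := Nat.card_le_card_of_injective f hf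
  _ = 2 ^ (n - 1) - 1 := by rw [Nat.card_eq_fintype_card]; exact card_target hn a

lemma lower_bound {n : ℕ} (hn : 3 ≤ n) :
    ∃ S : Set (BVert n), S.Finite ∧ S.Pairwise (fun u v => ¬ (srGraph (GcB n)).Adj u v)
      ∧ Nat.card S = 2 ^ (n - 1) - 1 := by
  classical
  set a : Fin n := ⟨0, by omega⟩ with ha
  refine ⟨{s : BVert n | a ∈ s.1}, Set.toFinite _, ?_, ?_⟩
  · intro u hu v hv huv hadj
    have hx : a ∈ u.1 ∩ v.1 := Finset.mem_inter.2 ⟨hu, hv⟩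
    rw [((sr_adj_iff hn u v).1 hadj).2] at hx
    simp at hx
  · have e : {s : BVert n | a ∈ s.1} ≃
        {t : Finset (Fin n) // a ∈ t ∧ t ≠ Finset.univ} :=
      { toFun := fun s => ⟨s.1.1, s.2, s.1.2.2⟩
        invFun := fun t => ⟨⟨t.1, fun h => by
          have := t.2.1; rw [h] at this; simp at this, t.2.2⟩, t.2.1⟩
        left_inv := fun s => rfl
        right_inv := fun t => rfl }
    rw [Nat.card_congr e, Nat.card_eq_fintype_card]
    exact card_target hn a


/-- for `n ≥ 3`, the independence number of the strong resolving graph of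
`G^c(2^n)` equals `2^(n-1) - 1`. -/
theorem indepNum_srGraph_gc_boolean (n : ℕ) (hn : 3 ≤ n) :
    indepNum (srGraph (GcB n)) = 2 ^ (n - 1) - 1 := by
  unfold indepNum
  obtain ⟨S, hfin, hpair, hcard⟩ := lower_bound hn
  have hmem : (2 ^ (n - 1) - 1) ∈
      {k | ∃ S : Set (BVert n), S.Finite ∧
        S.Pairwise (fun u v => ¬ (srGraph (GcB n)).Adj u v) ∧ Nat.card S = k} :=
    ⟨S, hfin, hpair, hcard⟩
  have hub : ∀ k ∈ {k | ∃ S : Set (BVert n), S.Finite ∧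
      S.Pairwise (fun u v => ¬ (srGraph (GcB n)).Adj u v) ∧ Nat.card S = k},
      k ≤ 2 ^ (n - 1) - 1 := by
    rintro k ⟨S, hfin', hpair', rfl⟩
    exact upper_bound hn hfin' hpair'
  exact le_antisymm (csSup_le ⟨_, hmem⟩ hub) (le_csSup ⟨_, hub⟩ hmem)
end

section
/- Let n ≥ 3 and let 2^n be the Boolean lattice of all subsets of an n-element set. Then the strong metric dimension of G^c(2^n) equals 2^n − 2^{n-1} − 1. -/
/-- The strong metric dimension of `G`: the minimum cardinality of a (finite) strong
resolving set. -/
noncomputable def sdim {V : Type*} (G : SimpleGraph V) : ℕ :=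
  sInf {k | ∃ W : Set V, W.Finite ∧ IsStrongResolvingSet G W ∧ Nat.card W = k}

namespace GcBAux

variable {n : ℕ}

instance : Fintype (BVert n) := by unfold BVert; infer_instance

lemma adj_iff {u v : BVert n} : (GcB n).Adj u v ↔ u ≠ v ∧ u.1 ∩ v.1 ≠ ∅ := Iff.rfl

lemma val_ne {u v : BVert n} (h : u ≠ v) : u.1 ≠ v.1 := fun h' => h (Subtype.ext h')

/-- The complement vertex. -/
def cpl (u : BVert n) : BVert n :=
  ⟨u.1ᶜ, fun h => u.2.2 ((Finset.compl_eq_empty_iff _).1 h),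
    fun h => u.2.1 ((Finset.compl_eq_univ_iff _).1 h)⟩

lemma cpl_injective : Function.Injective (cpl (n := n)) := by
  intro s t h
  exact Subtype.ext (compl_injective (congrArg Subtype.val h))

lemma exists_common (hn : 3 ≤ n) {u v : BVert n} (hne : u ≠ v) (hd : u.1 ∩ v.1 = ∅) :
    ∃ w, (GcB n).Adj u w ∧ (GcB n).Adj w v := by
  obtain ⟨x, hx⟩ := Finset.nonempty_iff_ne_empty.2 u.2.1
  obtain ⟨y, hy⟩ := Finset.nonempty_iff_ne_empty.2 v.2.1
  have hyu : y ∉ u.1 := fun h => Finset.notMem_empty y (hd ▸ Finset.mem_inter.2 ⟨h, hy⟩)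
  have hxv : x ∉ v.1 := fun h => Finset.notMem_empty x (hd ▸ Finset.mem_inter.2 ⟨hx, h⟩)
  have hxy : x ≠ y := fun h => hyu (h ▸ hx)
  have hw1 : ({x, y} : Finset (Fin n)) ≠ ∅ := Finset.ne_empty_of_mem (Finset.mem_insert_self x _)
  have hw2 : ({x, y} : Finset (Fin n)) ≠ Finset.univ := by
    intro h
    have h2 : ({x, y} : Finset (Fin n)).card = 2 := Finset.card_pair hxy
    rw [h, Finset.card_univ, Fintype.card_fin] at h2
    omega
  have hyw : y ∈ ({x, y} : Finset (Fin n)) := Finset.mem_insert_of_mem (Finset.mem_singleton_self y)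
  refine ⟨⟨{x, y}, hw1, hw2⟩, ⟨fun h => hyu ?_, Finset.ne_empty_of_mem
    (Finset.mem_inter.2 ⟨hx, Finset.mem_insert_self x _⟩)⟩,
    ⟨fun h => hxv ?_, Finset.ne_empty_of_mem (Finset.mem_inter.2 ⟨hyw, hy⟩)⟩⟩
  · rw [h]; exact hyw
  · rw [← h]; exact Finset.mem_insert_self x _

lemma reachable (hn : 3 ≤ n) (u v : BVert n) : (GcB n).Reachable u v := by
  rcases eq_or_ne u v with rfl | hne
  · exact SimpleGraph.Reachable.refl u
  rcases eq_or_ne (u.1 ∩ v.1) ∅ with hd | hd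
  · obtain ⟨w, h1, h2⟩ := exists_common hn hne hd
    exact h1.reachable.trans h2.reachable
  · exact (adj_iff.2 ⟨hne, hd⟩).reachable

lemma dist_eq_two (hn : 3 ≤ n) {u v : BVert n} (hne : u ≠ v) (hd : u.1 ∩ v.1 = ∅) :
    (GcB n).dist u v = 2 := by
  obtain ⟨w, h1, h2⟩ := exists_common hn hne hd
  have hle : (GcB n).dist u v ≤ 2 := by
    simpa using SimpleGraph.dist_le (SimpleGraph.Walk.cons h1 (SimpleGraph.Walk.cons h2 SimpleGraph.Walk.nil))
  have h0 : (GcB n).dist u v ≠ 0 := fun h => hne ((reachable hn u v).dist_eq_zero_iff.1 h)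
  have h1' : (GcB n).dist u v ≠ 1 := by
    intro h
    exact ((SimpleGraph.dist_eq_one_iff_adj.1 h).2) hd
  omega

lemma dist_le_two (hn : 3 ≤ n) (u v : BVert n) : (GcB n).dist u v ≤ 2 := by
  rcases eq_or_ne u v with rfl | hne
  · simp [SimpleGraph.dist_self]
  rcases eq_or_ne (u.1 ∩ v.1) ∅ with hd | hd
  · exact le_of_eq (dist_eq_two hn hne hd)
  · exact le_of_eq (SimpleGraph.dist_eq_one_iff_adj.2 (adj_iff.2 ⟨hne, hd⟩)) |>.trans (by norm_num)

lemma res_self_left {V : Type*} (G : SimpleGraph V) (u v : V) : StronglyResolves G u u v :=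
  Or.inr (by simp [SimpleGraph.dist_self])

lemma res_self_right {V : Type*} (G : SimpleGraph V) (u v : V) : StronglyResolves G v u v :=
  Or.inl (by simp [SimpleGraph.dist_self])

lemma resolver_mem (hn : 3 ≤ n) {u v w : BVert n} (hne : u ≠ v) (hd : u.1 ∩ v.1 = ∅)
    (h : StronglyResolves (GcB n) w u v) : w = u ∨ w = v := by
  have h2 : (GcB n).dist u v = 2 := dist_eq_two hn hne hd
  have h2' : (GcB n).dist v u = 2 := by rw [SimpleGraph.dist_comm]; exact h2
  have hle1 := dist_le_two hn u w
  have hle2 := dist_le_two hn v w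
  rcases h with h | h
  · right
    have : (GcB n).dist v w = 0 := by omega
    exact ((reachable hn v w).dist_eq_zero_iff.1 this).symm
  · left
    have : (GcB n).dist u w = 0 := by omega
    exact ((reachable hn u w).dist_eq_zero_iff.1 this).symm

lemma card_bvert (hn : 3 ≤ n) : Nat.card (BVert n) = 2 ^ n - 2 := by
  have hne : (Finset.univ : Finset (Fin n)) ≠ ∅ :=
    Finset.ne_empty_of_mem (Finset.mem_univ (⟨0, by omega⟩ : Fin n))
  have hmem : ∀ t : Finset (Fin n),
      t ∈ ((Finset.univ : Finset (Finset (Fin n))).erase ∅).erase Finset.univ ↔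
        t ≠ ∅ ∧ t ≠ Finset.univ := by
    intro t
    rw [Finset.mem_erase, Finset.mem_erase]
    exact ⟨fun h => ⟨h.2.1, h.1⟩, fun h => ⟨h.2, h.1, Finset.mem_univ _⟩⟩
  have E : BVert n ≃
      {t : Finset (Fin n) // t ∈ ((Finset.univ : Finset (Finset (Fin n))).erase ∅).erase Finset.univ} :=
    { toFun := fun s => ⟨s.1, (hmem _).2 s.2⟩
      invFun := fun t => ⟨t.1, (hmem _).1 t.2⟩
      left_inv := fun _ => rfl
      right_inv := fun _ => rfl }
  rw [Nat.card_congr E, Nat.card_eq_fintype_card, Fintype.card_coe]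
  rw [Finset.card_erase_of_mem (Finset.mem_erase.2 ⟨hne, Finset.mem_univ _⟩),
    Finset.card_erase_of_mem (Finset.mem_univ _), Finset.card_univ, Fintype.card_finset,
    Fintype.card_fin]
  omega

lemma card_avoid (hn : 3 ≤ n) (z : Fin n) :
    Nat.card {s : BVert n | z ∉ s.1} = 2 ^ (n - 1) - 1 := by
  set F : Finset (Finset (Fin n)) :=
    ((Finset.univ.erase z).powerset).erase ∅ with hF
  have hmem : ∀ t : Finset (Fin n), t ∈ F ↔ t ≠ ∅ ∧ z ∉ t := by
    intro t
    rw [hF, Finset.mem_erase, Finset.mem_powerset, Finset.subset_erase]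
    constructor
    · rintro ⟨h1, _, h3⟩; exact ⟨h1, h3⟩
    · rintro ⟨h1, h2⟩; exact ⟨h1, Finset.subset_univ t, h2⟩
  have E : {s : BVert n | z ∉ s.1} ≃ {t : Finset (Fin n) // t ∈ F} :=
    { toFun := fun s => ⟨s.1.1, (hmem _).2 ⟨s.1.2.1, s.2⟩⟩
      invFun := fun t => ⟨⟨t.1, ((hmem _).1 t.2).1,
        fun h => ((hmem _).1 t.2).2 (h ▸ Finset.mem_univ z)⟩, ((hmem _).1 t.2).2⟩
      left_inv := fun _ => rfl
      right_inv := fun _ => rfl }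
  rw [Nat.card_congr E, Nat.card_eq_fintype_card, Fintype.card_coe, hF]
  rw [Finset.card_erase_of_mem (Finset.empty_mem_powerset _), Finset.card_powerset,
    Finset.card_erase_of_mem (Finset.mem_univ _), Finset.card_univ, Fintype.card_fin]

lemma upper (hn : 3 ≤ n) (z : Fin n) :
    IsStrongResolvingSet (GcB n) {s : BVert n | z ∉ s.1} := by
  intro u v hne
  by_cases hu : z ∈ u.1
  · by_cases hv : z ∈ v.1
    · -- both contain z, so adjacent
      have hadj : (GcB n).Adj u v := ⟨hne, Finset.ne_empty_of_mem (Finset.mem_inter.2 ⟨hu, hv⟩)⟩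
      have hd1 : (GcB n).dist u v = 1 := SimpleGraph.dist_eq_one_iff_adj.2 hadj
      have hd1' : (GcB n).dist v u = 1 := by rw [SimpleGraph.dist_comm]; exact hd1
      by_cases hA : (u.1 \ v.1).Nonempty
      · obtain ⟨a, ha⟩ := hA
        rw [Finset.mem_sdiff] at ha
        refine ⟨cpl v, fun h => (Finset.mem_compl.1 h) hv, Or.inr ?_⟩
        have hvw : (GcB n).dist v (cpl v) = 2 := by
          refine dist_eq_two hn ?_ (Finset.inter_compl v.1)
          intro h
          exact (Finset.mem_compl.1 (h ▸ hv : z ∈ (cpl v).1)) hv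
        have huw : (GcB n).dist u (cpl v) = 1 := by
          refine SimpleGraph.dist_eq_one_iff_adj.2 ⟨?_, ?_⟩
          · intro h
            exact (Finset.mem_compl.1 (h ▸ hu : z ∈ (cpl v).1)) hv
          · exact Finset.ne_empty_of_mem (Finset.mem_inter.2 ⟨ha.1, Finset.mem_compl.2 ha.2⟩)
        rw [hvw, hd1', huw]
      · have hB : (v.1 \ u.1).Nonempty := by
          rw [Finset.nonempty_iff_ne_empty]
          intro h
          rw [Finset.not_nonempty_iff_eq_empty, Finset.sdiff_eq_empty_iff_subset] at hA
          rw [Finset.sdiff_eq_empty_iff_subset] at h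
          exact val_ne hne (Finset.Subset.antisymm hA h)
        obtain ⟨a, ha⟩ := hB
        rw [Finset.mem_sdiff] at ha
        refine ⟨cpl u, fun h => (Finset.mem_compl.1 h) hu, Or.inl ?_⟩
        have huw : (GcB n).dist u (cpl u) = 2 := by
          refine dist_eq_two hn ?_ (Finset.inter_compl u.1)
          intro h
          exact (Finset.mem_compl.1 (h ▸ hu : z ∈ (cpl u).1)) hu
        have hvw : (GcB n).dist v (cpl u) = 1 := by
          refine SimpleGraph.dist_eq_one_iff_adj.2 ⟨?_, ?_⟩
          · intro h
            exact (Finset.mem_compl.1 (h ▸ hv : z ∈ (cpl u).1)) hu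
          · exact Finset.ne_empty_of_mem (Finset.mem_inter.2 ⟨ha.1, Finset.mem_compl.2 ha.2⟩)
        rw [huw, hd1, hvw]
    · exact ⟨v, hv, res_self_right _ u v⟩
  · exact ⟨u, hu, res_self_left _ u v⟩

lemma lower (hn : 3 ≤ n) (k : ℕ)
    (hk : ∃ W : Set (BVert n), W.Finite ∧ IsStrongResolvingSet (GcB n) W ∧ Nat.card W = k) :
    2 ^ (n - 1) - 1 ≤ k := by
  obtain ⟨W, hWf, hWr, rfl⟩ := hk
  set F : Set (BVert n) := Wᶜ with hFdef
  have hint : ∀ u ∈ F, ∀ v ∈ F, u ≠ v → u.1 ∩ v.1 ≠ ∅ := by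
    intro u hu v hv hne hd
    obtain ⟨w, hwW, hres⟩ := hWr u v hne
    rcases resolver_mem hn hne hd hres with rfl | rfl
    · exact hu hwW
    · exact hv hwW
  have hdisj : Disjoint F (cpl '' F) := by
    rw [Set.disjoint_left]
    rintro x hxF ⟨t, htF, rfl⟩
    have hne : cpl t ≠ t := by
      intro h
      have heq : t.1ᶜ = t.1 := congrArg Subtype.val h
      have h2 : t.1 ∩ t.1 = ∅ := by
        nth_rewrite 1 [← heq]
        rw [Finset.inter_comm]
        exact Finset.inter_compl t.1
      rw [Finset.inter_self] at h2
      exact t.2.1 h2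
    exact hint _ hxF _ htF hne (by
      show t.1ᶜ ∩ t.1 = ∅
      rw [Finset.inter_comm]
      exact Finset.inter_compl t.1)
  have hunion : (F ∪ cpl '' F).ncard = F.ncard + (cpl '' F).ncard :=
    Set.ncard_union_eq hdisj (Set.toFinite _) (Set.toFinite _)
  have him : (cpl '' F).ncard = F.ncard := Set.ncard_image_of_injective _ cpl_injective
  have hle : (F ∪ cpl '' F).ncard ≤ Nat.card (BVert n) := by
    rw [← Set.ncard_univ]
    exact Set.ncard_le_ncard (Set.subset_univ _) (Set.toFinite _)
  have hcard : W.ncard + F.ncard = Nat.card (BVert n) :=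
    Set.ncard_add_ncard_compl W (Set.toFinite _) (Set.toFinite _)
  have hV : Nat.card (BVert n) = 2 ^ n - 2 := card_bvert hn
  have hpow : 2 ^ n = 2 * 2 ^ (n - 1) := by
    conv_lhs => rw [show n = (n - 1) + 1 by omega]
    rw [pow_succ]
    ring
  have hW : Nat.card ↥W = W.ncard := Nat.card_coe_set_eq W
  omega

end GcBAux

/-- for `n ≥ 3`, the strong metric dimension of `G^c(2^n)` equals
`2^n - 2^(n-1) - 1`. -/
theorem sdim_gc_boolean (n : ℕ) (hn : 3 ≤ n) :
    sdim (GcB n) = 2 ^ n - 2 ^ (n - 1) - 1 := by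
  have z : Fin n := ⟨0, by omega⟩
  have hmem : (2 ^ (n - 1) - 1) ∈
      {k | ∃ W : Set (BVert n), W.Finite ∧ IsStrongResolvingSet (GcB n) W ∧ Nat.card W = k} :=
    ⟨{s : BVert n | z ∉ s.1}, Set.toFinite _, GcBAux.upper hn z, GcBAux.card_avoid hn z⟩
  have h1 : sdim (GcB n) ≤ 2 ^ (n - 1) - 1 := Nat.sInf_le hmem
  have h2 : 2 ^ (n - 1) - 1 ≤ sdim (GcB n) :=
    GcBAux.lower hn _ (Nat.sInf_mem (⟨_, hmem⟩ : Set.Nonempty _))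
  have hpow : 2 ^ n = 2 * 2 ^ (n - 1) := by
    conv_lhs => rw [show n = (n - 1) + 1 by omega]
    rw [pow_succ]
    ring
  omega
end

section
/- Let R be a finite commutative ring with identity having exactly n maximal ideals, where n ≥ 3. Let Γ be the maximal graph of R (equal to the complement Γ_2'(R)^c of the restricted comaximal graph): its vertices are the non-unit elements of R that do not lie in the Jacobson radical J(R) (the intersection of all maximal ideals), and distinct vertices x, y are adjacent iff x and y lie in a common maximal ideal of R. Then sdim_M(Γ) = |V(Γ)| − 2^{n−1} + 1, where |V(Γ)| is the number of non-units of R outside J(R). -/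
/-- Vertices of the maximal graph of `R`: non-units of `R` lying outside the Jacobson
radical, i.e. outside the intersection of all maximal ideals. -/
def MaxVert (R : Type*) [CommRing R] : Type _ :=
  {x : R // ¬ IsUnit x ∧ ∃ M : Ideal R, M.IsMaximal ∧ x ∉ M}

/-- The maximal graph of `R` (the complement `Γ₂'(R)^c` of the restricted comaximal
graph): distinct vertices are adjacent iff they lie in a common maximal ideal. -/
def MaxGraph (R : Type*) [CommRing R] : SimpleGraph (MaxVert R) where
  Adj x y := x ≠ y ∧ ∃ M : Ideal R, M.IsMaximal ∧ x.1 ∈ M ∧ y.1 ∈ M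
  symm := ⟨fun x y h => ⟨h.1.symm, h.2.imp fun M hM => ⟨hM.1, hM.2.2, hM.2.1⟩⟩⟩
  loopless := ⟨fun x h => h.1 rfl⟩

section Basic

variable {R : Type*} [CommRing R] [Finite R]

abbrev MIdeal (R : Type*) [CommRing R] := {M : Ideal R // M.IsMaximal}

instance : Finite (Ideal R) :=
  Finite.of_injective (fun I : Ideal R => (I : Set R)) SetLike.coe_injective

instance : Finite (MaxVert R) := inferInstanceAs (Finite (Subtype _))

/-- CRT: realize any prescribed membership pattern in maximal ideals. -/
lemma exists_pattern (S : Set (MIdeal R)) :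
    ∃ x : R, ∀ M : MIdeal R, (x ∈ M.1 ↔ M ∈ S) := by
  classical
  have hsurj : Function.Surjective
      (Ideal.quotientInfToPiQuotient (fun M : MIdeal R => M.1)) :=
    Ideal.quotientInfToPiQuotient_surj (fun M N hMN =>
      Ideal.isCoprime_iff_sup_eq.mpr (M.2.coprime_of_ne N.2 (fun h => hMN (Subtype.ext h))))
  obtain ⟨y, hy⟩ := hsurj (fun M => if M ∈ S then 0 else 1)
  obtain ⟨x, rfl⟩ := Ideal.Quotient.mk_surjective y
  refine ⟨x, fun M => ?_⟩
  have hM : Ideal.Quotient.mk M.1 x = if M ∈ S then 0 else 1 := by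
    have := congrFun hy M
    rwa [Ideal.quotientInfToPiQuotient_mk'] at this
  haveI : Nontrivial (R ⧸ M.1) := Ideal.Quotient.nontrivial_iff.mpr M.2.ne_top
  constructor
  · intro hx
    by_contra hMS
    rw [if_neg hMS] at hM
    exact one_ne_zero ((Ideal.Quotient.eq_zero_iff_mem.mpr hx).symm.trans hM).symm
  · intro hMS
    rw [if_pos hMS] at hM
    exact Ideal.Quotient.eq_zero_iff_mem.mp hM

def vtype {R : Type*} [CommRing R] (x : MaxVert R) : Set (MIdeal R) := {M | x.1 ∈ M.1}

lemma vtype_nonempty (x : MaxVert R) : (vtype x).Nonempty := by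
  obtain ⟨M, hM, hle⟩ := Ideal.exists_le_maximal (Ideal.span {x.1})
    (fun h => x.2.1 (Ideal.span_singleton_eq_top.mp h))
  exact ⟨⟨M, hM⟩, hle (Ideal.subset_span rfl)⟩

lemma vtype_ne_univ (x : MaxVert R) : vtype x ≠ Set.univ := by
  obtain ⟨M, hM, hx⟩ := x.2.2
  intro h
  exact hx (by have : (⟨M, hM⟩ : MIdeal R) ∈ vtype x := h ▸ Set.mem_univ _; exact this)

lemma exists_vert {S : Set (MIdeal R)} (h1 : S.Nonempty) (h2 : S ≠ Set.univ) :
    ∃ v : MaxVert R, vtype v = S := by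
  obtain ⟨x, hx⟩ := exists_pattern S
  obtain ⟨M, hM⟩ := h1
  obtain ⟨N, hN⟩ := Set.ne_univ_iff_exists_notMem S |>.mp h2
  refine ⟨⟨x, ?_, N.1, N.2, fun h => hN ((hx N).mp h)⟩, ?_⟩
  · exact fun hu => M.2.ne_top (M.1.eq_top_of_isUnit_mem ((hx M).mpr hM) hu)
  · ext M'; exact hx M'

end Basic

section Graph

variable {R : Type*} [CommRing R] [Finite R]

lemma maxAdj_iff {u v : MaxVert R} :
    (MaxGraph R).Adj u v ↔ u ≠ v ∧ (vtype u ∩ vtype v).Nonempty := by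
  show (u ≠ v ∧ ∃ M : Ideal R, M.IsMaximal ∧ u.1 ∈ M ∧ v.1 ∈ M) ↔ _
  constructor
  · rintro ⟨h, M, hM, h1, h2⟩; exact ⟨h, ⟨M, hM⟩, h1, h2⟩
  · rintro ⟨h, ⟨M, h1, h2⟩⟩; exact ⟨h, M.1, M.2, h1, h2⟩

lemma exists_third (hcard : 3 ≤ Nat.card (MIdeal R)) (M N : MIdeal R) :
    ∃ P : MIdeal R, P ≠ M ∧ P ≠ N := by
  by_contra h
  push_neg at h
  have hsub : (Set.univ : Set (MIdeal R)) ⊆ {M, N} := by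
    intro P _
    rcases Classical.em (P = M) with h1 | h1
    · exact Or.inl h1
    · exact Or.inr (h P h1)
  have : Nat.card (MIdeal R) ≤ 2 := by
    rw [← Set.ncard_univ]
    calc (Set.univ : Set (MIdeal R)).ncard ≤ ({M, N} : Set (MIdeal R)).ncard :=
          Set.ncard_le_ncard hsub (Set.toFinite _)
      _ ≤ 2 := by
          refine le_trans (Set.ncard_insert_le _ _) ?_
          simp [Set.ncard_singleton]
  omega

lemma maxDist_one {u v : MaxVert R} (hne : u ≠ v) (hint : (vtype u ∩ vtype v).Nonempty) :
    (MaxGraph R).dist u v = 1 :=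
  SimpleGraph.dist_eq_one_iff_adj.mpr (maxAdj_iff.mpr ⟨hne, hint⟩)

lemma reach_dist_two (hcard : 3 ≤ Nat.card (MIdeal R)) {u v : MaxVert R} (hne : u ≠ v)
    (hdisj : vtype u ∩ vtype v = ∅) :
    (MaxGraph R).Reachable u v ∧ (MaxGraph R).dist u v = 2 := by
  obtain ⟨M, hM⟩ := vtype_nonempty u
  obtain ⟨N, hN⟩ := vtype_nonempty v
  obtain ⟨P, hPM, hPN⟩ := exists_third hcard M N
  have hS1 : ({M, N} : Set (MIdeal R)).Nonempty := ⟨M, Or.inl rfl⟩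
  have hS2 : ({M, N} : Set (MIdeal R)) ≠ Set.univ := by
    intro h
    have : P ∈ ({M, N} : Set (MIdeal R)) := h ▸ Set.mem_univ _
    rcases this with h' | h' <;> [exact hPM h'; exact hPN h']
  obtain ⟨w, hw⟩ := exists_vert hS1 hS2
  have hNu : N ∉ vtype u := fun h => Set.eq_empty_iff_forall_notMem.mp hdisj N ⟨h, hN⟩
  have hMv : M ∉ vtype v := fun h => Set.eq_empty_iff_forall_notMem.mp hdisj M ⟨hM, h⟩
  have huw : u ≠ w := by
    intro h; exact hNu (h ▸ (hw ▸ (Or.inr rfl : N ∈ ({M, N} : Set (MIdeal R)))))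
  have hwv : w ≠ v := by
    intro h; exact hMv (h ▸ (hw ▸ (Or.inl rfl : M ∈ ({M, N} : Set (MIdeal R)))))
  have h1 : (MaxGraph R).Adj u w := maxAdj_iff.mpr ⟨huw, M, hM, hw ▸ Or.inl rfl⟩
  have h2 : (MaxGraph R).Adj w v := maxAdj_iff.mpr ⟨hwv, N, hw ▸ Or.inr rfl, hN⟩
  have hreach : (MaxGraph R).Reachable u v := ⟨SimpleGraph.Walk.cons h1 h2.toWalk⟩
  refine ⟨hreach, ?_⟩
  have hle : (MaxGraph R).dist u v ≤ 2 := by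
    have := SimpleGraph.dist_le (SimpleGraph.Walk.cons h1 h2.toWalk)
    simpa using this
  have h0 : (MaxGraph R).dist u v ≠ 0 := fun h => hne (hreach.dist_eq_zero_iff.mp h)
  have hne1 : (MaxGraph R).dist u v ≠ 1 := by
    intro h
    obtain ⟨-, x, hx⟩ := maxAdj_iff.mp (SimpleGraph.dist_eq_one_iff_adj.mp h)
    exact Set.eq_empty_iff_forall_notMem.mp hdisj x hx
  omega

lemma maxReachable (hcard : 3 ≤ Nat.card (MIdeal R)) (u v : MaxVert R) :
    (MaxGraph R).Reachable u v := by
  rcases Classical.em (u = v) with rfl | hne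
  · exact SimpleGraph.Reachable.refl u
  rcases Classical.em ((vtype u ∩ vtype v).Nonempty) with hint | hint
  · exact (maxAdj_iff.mpr ⟨hne, hint⟩).reachable
  · exact (reach_dist_two hcard hne (Set.not_nonempty_iff_eq_empty.mp hint)).1

lemma maxDist_le_two (hcard : 3 ≤ Nat.card (MIdeal R)) (u v : MaxVert R) :
    (MaxGraph R).dist u v ≤ 2 := by
  rcases Classical.em (u = v) with rfl | hne
  · simp [SimpleGraph.dist_self]
  rcases Classical.em ((vtype u ∩ vtype v).Nonempty) with hint | hint
  · rw [maxDist_one hne hint]; omega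
  · rw [(reach_dist_two hcard hne (Set.not_nonempty_iff_eq_empty.mp hint)).2]

lemma maxDist_eq_zero_iff (hcard : 3 ≤ Nat.card (MIdeal R)) {u v : MaxVert R} :
    (MaxGraph R).dist u v = 0 ↔ u = v :=
  (maxReachable hcard u v).dist_eq_zero_iff

lemma dist_eq_of_vtype_eq (hcard : 3 ≤ Nat.card (MIdeal R)) {u v w : MaxVert R}
    (h : vtype u = vtype v) (hwu : w ≠ u) (hwv : w ≠ v) :
    (MaxGraph R).dist u w = (MaxGraph R).dist v w := by
  rcases Classical.em ((vtype u ∩ vtype w).Nonempty) with hint | hint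
  · rw [maxDist_one (Ne.symm hwu) hint, maxDist_one (Ne.symm hwv) (h ▸ hint)]
  · have h1 := Set.not_nonempty_iff_eq_empty.mp hint
    rw [(reach_dist_two hcard (Ne.symm hwu) h1).2,
      (reach_dist_two hcard (Ne.symm hwv) (h ▸ h1)).2]

end Graph

section Counting

variable {ι : Type*} [Finite ι]

lemma card_set_eq : Nat.card (Set ι) = 2 ^ Nat.card ι := by
  have h1 : Nat.card (Set ι) = Nat.card (ι → Prop) := rfl
  rw [h1, Nat.card_fun]
  congr 1
  rw [Nat.card_congr Equiv.propEquivBool]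
  simp

lemma card_ne_of_elem (a : ι) : Nat.card {i : ι // i ≠ a} = Nat.card ι - 1 := by
  classical
  haveI : Unique {i : ι // i = a} := ⟨⟨⟨a, rfl⟩⟩, fun ⟨i, h⟩ => Subtype.ext h⟩
  have key := Nat.card_congr (Equiv.sumCompl (fun i : ι => i = a))
  rw [Nat.card_sum, Nat.card_unique] at key
  have h2 : Nat.card {i : ι // i ≠ a} = Nat.card {i : ι // ¬ i = a} := rfl
  omega

lemma card_ne_univ_s11 : Nat.card {S : Set ι // S ≠ Set.univ} = 2 ^ Nat.card ι - 1 := by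
  classical
  haveI : Unique {S : Set ι // S = Set.univ} :=
    ⟨⟨⟨Set.univ, rfl⟩⟩, fun ⟨S, h⟩ => Subtype.ext h⟩
  have key := Nat.card_congr (Equiv.sumCompl (fun S : Set ι => S = Set.univ))
  rw [Nat.card_sum, card_set_eq, Nat.card_unique] at key
  have h2 : Nat.card {S : Set ι // S ≠ Set.univ} = Nat.card {S : Set ι // ¬ S = Set.univ} := rfl
  omega

/-- The sets containing a fixed element and different from `univ`. -/
def memNeUnivEquiv (a : ι) :
    {S : Set ι // a ∈ S ∧ S ≠ Set.univ} ≃ {T : Set {i : ι // i ≠ a} // T ≠ Set.univ} where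
  toFun S := ⟨{j | j.1 ∈ S.1}, by
    intro h
    apply S.2.2
    ext i
    simp only [Set.mem_univ, iff_true]
    rcases Classical.em (i = a) with rfl | hne
    · exact S.2.1
    · have : (⟨i, hne⟩ : {i : ι // i ≠ a}) ∈ {j : {i : ι // i ≠ a} | j.1 ∈ S.1} :=
        h ▸ Set.mem_univ _
      exact this⟩
  invFun T := ⟨{i | ∀ h : i ≠ a, (⟨i, h⟩ : {i : ι // i ≠ a}) ∈ T.1}, by
    constructor
    · intro h; exact absurd rfl h
    · intro h
      obtain ⟨j, hj⟩ := Set.ne_univ_iff_exists_notMem T.1 |>.mp T.2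
      have : j.1 ∈ Set.univ := Set.mem_univ _
      rw [← h] at this
      exact hj (by simpa using this j.2)⟩
  left_inv S := by
    apply Subtype.ext
    ext i
    simp only [Set.mem_setOf_eq]
    constructor
    · intro h
      rcases Classical.em (i = a) with rfl | hne
      · exact S.2.1
      · exact h hne
    · intro h _; exact h
  right_inv T := by
    apply Subtype.ext
    ext j
    simp only [Set.mem_setOf_eq]
    constructor
    · intro h; exact h j.2
    · intro h hne
      have : (⟨j.1, hne⟩ : {i : ι // i ≠ a}) = j := Subtype.ext rfl
      rwa [this]

lemma card_mem_ne_univ (a : ι) :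
    Nat.card {S : Set ι // a ∈ S ∧ S ≠ Set.univ} = 2 ^ (Nat.card ι - 1) - 1 := by
  rw [Nat.card_congr (memNeUnivEquiv a), card_ne_univ_s11, card_ne_of_elem a]

lemma intersecting_bound (hι : 1 ≤ Nat.card ι) {G : Set (Set ι)}
    (hsub : ∀ S ∈ G, S.Nonempty ∧ S ≠ Set.univ)
    (hint : ∀ S ∈ G, ∀ T ∈ G, (S ∩ T).Nonempty) :
    G.ncard ≤ 2 ^ (Nat.card ι - 1) - 1 := by
  set G' : Set (Set ι) := compl '' G with hG'
  have hdisj : Disjoint G G' := by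
    rw [Set.disjoint_left]
    rintro S hS ⟨T, hT, rfl⟩
    obtain ⟨x, hx1, hx2⟩ := hint _ hS _ hT
    exact hx1 hx2
  have hcompl : G ∪ G' ⊆ {(∅ : Set ι)}ᶜ := by
    rintro S (hS | ⟨T, hT, rfl⟩) h
    · exact (hsub S hS).1.ne_empty (Set.mem_singleton_iff.mp h)
    · exact (hsub T hT).2 (compl_eq_bot.mp (Set.mem_singleton_iff.mp h))
  have hunion : G.ncard + G'.ncard = (G ∪ G').ncard :=
    (Set.ncard_union_eq hdisj (Set.toFinite _) (Set.toFinite _)).symm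
  have himg : G'.ncard = G.ncard := Set.ncard_image_of_injective _ compl_injective
  have hle : (G ∪ G').ncard ≤ ({(∅ : Set ι)}ᶜ : Set (Set ι)).ncard :=
    Set.ncard_le_ncard hcompl (Set.toFinite _)
  have hcomplcard : ({(∅ : Set ι)} : Set (Set ι)).ncard
      + ({(∅ : Set ι)}ᶜ : Set (Set ι)).ncard = Nat.card (Set ι) :=
    Set.ncard_add_ncard_compl _
  rw [Set.ncard_singleton, card_set_eq] at hcomplcard
  have hpow : 2 ^ Nat.card ι = 2 * 2 ^ (Nat.card ι - 1) := by
    rw [← pow_succ']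
    congr 1
    omega
  have hp : 1 ≤ 2 ^ (Nat.card ι - 1) := Nat.one_le_two_pow
  omega

end Counting

section Rep

variable {R : Type*} [CommRing R] [Finite R]

open Classical in
noncomputable def typeRep (R : Type*) [CommRing R] [Finite R] [Nonempty (MaxVert R)]
    (S : Set (MIdeal R)) : MaxVert R :=
  if h : S.Nonempty ∧ S ≠ Set.univ then (exists_vert h.1 h.2).choose
  else Classical.arbitrary _

open Classical in
lemma vtype_typeRep [Nonempty (MaxVert R)] {S : Set (MIdeal R)}
    (h1 : S.Nonempty) (h2 : S ≠ Set.univ) : vtype (typeRep R S) = S := by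
  rw [typeRep, dif_pos (⟨h1, h2⟩ : _ ∧ _)]
  exact (exists_vert h1 h2).choose_spec

end Rep

/-- for a finite commutative ring `R` with exactly `n ≥ 3` maximal ideals,
the strong metric dimension of the maximal graph of `R` equals `|V(Γ)| - 2^(n-1) + 1`. -/
theorem sdim_maximal_graph (R : Type*) [CommRing R] [Finite R]
    (n : ℕ) (hn : 3 ≤ n) (hmax : Nat.card {M : Ideal R // M.IsMaximal} = n) :
    sdim (MaxGraph R) = Nat.card (MaxVert R) - 2 ^ (n - 1) + 1 := by
  classical
  have hcard : 3 ≤ Nat.card (MIdeal R) := hmax ▸ hn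
  have hι : Nonempty (MIdeal R) := (Nat.card_pos_iff.mp (by omega)).1
  obtain ⟨M₀⟩ := hι
  haveI hNE : Nonempty (MaxVert R) := by
    refine ⟨(exists_vert (Set.singleton_nonempty M₀) ?_).choose⟩
    intro h
    obtain ⟨P, hP, -⟩ := exists_third hcard M₀ M₀
    exact hP (Set.mem_singleton_iff.mp (h ▸ Set.mem_univ P))
  have hp1 : 1 ≤ 2 ^ (n - 1) := Nat.one_le_two_pow
  -- the excluded set T : one representative for each type containing M₀
  set T : Set (MaxVert R) := {v | M₀ ∈ vtype v ∧ typeRep R (vtype v) = v} with hTdef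
  set F : Set (Set (MIdeal R)) := {S | M₀ ∈ S ∧ S ≠ Set.univ} with hFdef
  have hbij : Set.BijOn vtype T F := by
    refine ⟨fun v hv => ⟨hv.1, vtype_ne_univ v⟩, fun u hu v hv h => ?_, fun S hS => ?_⟩
    · rw [← hu.2, ← hv.2, h]
    · have h1 : S.Nonempty := ⟨M₀, hS.1⟩
      refine ⟨typeRep R S, ⟨?_, ?_⟩, vtype_typeRep h1 hS.2⟩
      · rw [vtype_typeRep h1 hS.2]; exact hS.1
      · rw [vtype_typeRep h1 hS.2]
  have hFcard : F.ncard = 2 ^ (n - 1) - 1 := by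
    have h1 : F.ncard = Nat.card F := (Nat.card_coe_set_eq F).symm
    have h2 : Nat.card F = Nat.card {S : Set (MIdeal R) // M₀ ∈ S ∧ S ≠ Set.univ} :=
      Nat.card_congr (Equiv.subtypeEquivRight fun S => Iff.rfl)
    rw [h1, h2, card_mem_ne_univ M₀, hmax]
  have hTcard : T.ncard = 2 ^ (n - 1) - 1 := by
    rw [← hFcard, ← hbij.image_eq]
    exact (Set.ncard_image_of_injOn hbij.injOn).symm
  have hTc : T.ncard + Tᶜ.ncard = Nat.card (MaxVert R) := Set.ncard_add_ncard_compl T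
  -- a vertex outside T
  have hTcne : (Tᶜ : Set (MaxVert R)).Nonempty := by
    obtain ⟨M₁, hM₁, -⟩ := exists_third hcard M₀ M₀
    have hne_univ : ({M₁} : Set (MIdeal R)) ≠ Set.univ := by
      intro h
      exact hM₁ (Set.mem_singleton_iff.mp (h ▸ Set.mem_univ M₀)).symm
    obtain ⟨v₀, hv₀⟩ := exists_vert (Set.singleton_nonempty M₁) hne_univ
    refine ⟨v₀, fun hmem => ?_⟩
    exact hM₁ (Set.mem_singleton_iff.mp (hv₀ ▸ hmem.1)).symm
  have hVbig : 2 ^ (n - 1) ≤ Nat.card (MaxVert R) := by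
    have := (Set.ncard_pos (Set.toFinite _)).mpr hTcne
    omega
  -- upper bound : Tᶜ is a strong resolving set
  have hsrs : IsStrongResolvingSet (MaxGraph R) Tᶜ := by
    have key : ∀ u v : MaxVert R, u ∈ T → v ∈ T →
        (∃ i, i ∈ vtype v ∧ i ∉ vtype u) →
        ∃ w ∈ Tᶜ, StronglyResolves (MaxGraph R) w u v := by
      rintro u v hu hv ⟨i, hiv, hiu⟩
      have hA1 : ((vtype u)ᶜ : Set (MIdeal R)).Nonempty :=
        Set.nonempty_compl.mpr (vtype_ne_univ u)
      have hA2 : ((vtype u)ᶜ : Set (MIdeal R)) ≠ Set.univ := by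
        intro h
        obtain ⟨M, hM⟩ := vtype_nonempty u
        exact (h ▸ Set.mem_univ M : M ∈ (vtype u)ᶜ) hM
      obtain ⟨w, hw⟩ := exists_vert hA1 hA2
      have hwT : w ∈ Tᶜ := by
        intro hmem
        exact (hw ▸ hmem.1 : M₀ ∈ (vtype u)ᶜ) hu.1
      have huw : u ≠ w := by
        obtain ⟨M, hM⟩ := vtype_nonempty u
        intro h
        exact (hw ▸ (h ▸ hM : M ∈ vtype w) : M ∈ (vtype u)ᶜ) hM
      have hvw : v ≠ w := by
        intro h
        exact (hw ▸ (h ▸ hv.1 : M₀ ∈ vtype w) : M₀ ∈ (vtype u)ᶜ) hu.1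
      have hduw : (MaxGraph R).dist u w = 2 := by
        refine (reach_dist_two hcard huw ?_).2
        rw [hw]
        exact Set.inter_compl_self _
      have hdvw : (MaxGraph R).dist v w = 1 := by
        refine maxDist_one hvw ⟨i, hiv, ?_⟩
        rw [hw]; exact hiu
      have hduv : (MaxGraph R).dist u v = 1 := by
        refine maxDist_one ?_ ⟨M₀, hu.1, hv.1⟩
        intro h
        exact hiu (h ▸ hiv)
      exact ⟨w, hwT, Or.inl (by rw [hduw, hdvw, hduv])⟩
    intro u v hne
    by_cases hu : u ∈ Tᶜ
    · exact ⟨u, hu, Or.inr (by rw [SimpleGraph.dist_self, Nat.add_zero])⟩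
    by_cases hv : v ∈ Tᶜ
    · exact ⟨v, hv, Or.inl (by rw [SimpleGraph.dist_self, Nat.add_zero])⟩
    have hu' : u ∈ T := not_not.mp hu
    have hv' : v ∈ T := not_not.mp hv
    have htne : vtype u ≠ vtype v := by
      intro h
      exact hne (by rw [← hu'.2, ← hv'.2, h])
    rcases Classical.em (∃ i, i ∈ vtype v ∧ i ∉ vtype u) with h | h
    · exact key u v hu' hv' h
    · push_neg at h
      have h2 : ∃ i, i ∈ vtype u ∧ i ∉ vtype v := by
        by_contra h3
        push_neg at h3
        exact htne (Set.eq_of_subset_of_subset (fun i hi => h3 i hi) (fun i hi => h i hi))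
      obtain ⟨w, hwT, hres⟩ := key v u hv' hu' h2
      exact ⟨w, hwT, hres.symm⟩
  -- the value is attained
  have hmem : Nat.card (MaxVert R) - 2 ^ (n - 1) + 1 ∈
      {k | ∃ W : Set (MaxVert R), W.Finite ∧ IsStrongResolvingSet (MaxGraph R) W ∧
        Nat.card W = k} := by
    refine ⟨Tᶜ, Set.toFinite _, hsrs, ?_⟩
    rw [Nat.card_coe_set_eq]
    omega
  -- lower bound
  have hlow : ∀ k ∈ {k | ∃ W : Set (MaxVert R), W.Finite ∧
      IsStrongResolvingSet (MaxGraph R) W ∧ Nat.card W = k},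
      Nat.card (MaxVert R) - 2 ^ (n - 1) + 1 ≤ k := by
    rintro k ⟨W, hWfin, hres, rfl⟩
    have claim1 : Set.InjOn vtype Wᶜ := by
      intro u hu v hv h
      by_contra hne
      obtain ⟨w, hwW, hsr⟩ := hres u v hne
      have hwu : w ≠ u := fun he => hu (he ▸ hwW)
      have hwv : w ≠ v := fun he => hv (he ▸ hwW)
      have heq : (MaxGraph R).dist u w = (MaxGraph R).dist v w :=
        dist_eq_of_vtype_eq hcard h hwu hwv
      have hduv : (MaxGraph R).dist u v = 1 :=
        maxDist_one hne (h ▸ (by simpa using vtype_nonempty u))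
      have hdvu : (MaxGraph R).dist v u = 1 := by
        rw [SimpleGraph.dist_comm]; exact hduv
      rcases hsr with h1 | h1 <;> omega
    have claim2 : ∀ u ∈ Wᶜ, ∀ v ∈ Wᶜ, (vtype u ∩ vtype v).Nonempty := by
      intro u hu v hv
      by_contra hemp
      have hemp' : vtype u ∩ vtype v = ∅ := Set.not_nonempty_iff_eq_empty.mp hemp
      have hne : u ≠ v := by
        rintro rfl
        obtain ⟨M, hM⟩ := vtype_nonempty u
        exact (Set.eq_empty_iff_forall_notMem.mp hemp' M) ⟨hM, hM⟩
      obtain ⟨w, hwW, hsr⟩ := hres u v hne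
      have hwu : w ≠ u := fun he => hu (he ▸ hwW)
      have hwv : w ≠ v := fun he => hv (he ▸ hwW)
      have hduv : (MaxGraph R).dist u v = 2 := (reach_dist_two hcard hne hemp').2
      have hdvu : (MaxGraph R).dist v u = 2 := by
        rw [SimpleGraph.dist_comm]; exact hduv
      have hle1 : (MaxGraph R).dist u w ≤ 2 := maxDist_le_two hcard u w
      have hle2 : (MaxGraph R).dist v w ≤ 2 := maxDist_le_two hcard v w
      have hz1 : (MaxGraph R).dist v w ≠ 0 :=
        fun hz => hwv ((maxDist_eq_zero_iff hcard).mp hz).symm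
      have hz2 : (MaxGraph R).dist u w ≠ 0 :=
        fun hz => hwu ((maxDist_eq_zero_iff hcard).mp hz).symm
      rcases hsr with h1 | h1 <;> omega
    have hGsub : ∀ S ∈ vtype '' Wᶜ, S.Nonempty ∧ S ≠ Set.univ := by
      rintro S ⟨v, -, rfl⟩
      exact ⟨vtype_nonempty v, vtype_ne_univ v⟩
    have hGint : ∀ S ∈ vtype '' Wᶜ, ∀ S' ∈ vtype '' Wᶜ, (S ∩ S').Nonempty := by
      rintro S ⟨u, hu, rfl⟩ S' ⟨v, hv, rfl⟩
      exact claim2 u hu v hv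
    have hbound : (vtype '' Wᶜ).ncard ≤ 2 ^ (Nat.card (MIdeal R) - 1) - 1 :=
      intersecting_bound (by omega) hGsub hGint
    rw [hmax] at hbound
    have hAcard : (Wᶜ : Set (MaxVert R)).ncard = (vtype '' Wᶜ).ncard :=
      (Set.ncard_image_of_injOn claim1).symm
    have hWc : W.ncard + Wᶜ.ncard = Nat.card (MaxVert R) := Set.ncard_add_ncard_compl W
    rw [Nat.card_coe_set_eq]
    omega
  exact le_antisymm (Nat.sInf_le hmem) (le_csInf ⟨_, hmem⟩ hlow)
end

section
/- Let n ≥ 2 and let F_1, …, F_n be fields, and set R = F_1 × ⋯ × F_n. Then sdim_M(IG(R)) = 2^n − 2^{n−1} − 1, where IG(R) is the intersection graph of ideals of R. -/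
open Finset

/-- Vertices of the intersection graph of ideals of `R`: the nonzero proper ideals. -/
def IdealVert (R : Type*) [CommRing R] : Type _ :=
  {I : Ideal R // I ≠ ⊥ ∧ I ≠ ⊤}

/-- The intersection graph of ideals of `R`: distinct nonzero proper ideals are
adjacent iff their intersection is nonzero. -/
def IGraph (R : Type*) [CommRing R] : SimpleGraph (IdealVert R) where
  Adj I J := I ≠ J ∧ I.1 ⊓ J.1 ≠ ⊥
  symm := ⟨fun I J h => ⟨h.1.symm, by rw [inf_comm]; exact h.2⟩⟩
  loopless := ⟨fun I h => h.1 rfl⟩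

namespace SdimAux

variable {n : ℕ} {F : Fin n → Type*} [∀ i, Field (F i)]

/-- The ideal of the product ring supported on `S`. -/
def eS (S : Finset (Fin n)) : Ideal (∀ i, F i) where
  carrier := {x | ∀ i ∉ S, x i = 0}
  add_mem' := by intro a b ha hb i hi; simp [ha i hi, hb i hi]
  zero_mem' := by intro i hi; rfl
  smul_mem' := by intro c x hx i hi; simp [smul_eq_mul, hx i hi]

theorem mem_eS {S : Finset (Fin n)} {x : ∀ i, F i} : x ∈ eS S ↔ ∀ i ∉ S, x i = 0 := Iff.rfl

open Classical in
/-- The support of an ideal of the product ring. -/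
noncomputable def supp (I : Ideal (∀ i, F i)) : Finset (Fin n) :=
  Finset.univ.filter fun i => ∃ x ∈ I, x i ≠ 0

theorem mem_supp {I : Ideal (∀ i, F i)} {i : Fin n} :
    i ∈ supp I ↔ ∃ x ∈ I, x i ≠ 0 := by
  classical simp [supp]

theorem single_mem {I : Ideal (∀ i, F i)} {i : Fin n} (h : i ∈ supp I) :
    Pi.single i (1 : F i) ∈ I := by
  classical
  obtain ⟨y, hy, hyi⟩ := mem_supp.1 h
  have : Pi.single i (1 : F i) = (Pi.single i (y i)⁻¹ : ∀ j, F j) * y := by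
    funext j
    by_cases hj : j = i
    · subst hj; simp [inv_mul_cancel₀ hyi]
    · simp [Pi.single_eq_of_ne hj]
  rw [this]
  exact I.mul_mem_left _ hy

theorem ideal_eq_eS_supp (I : Ideal (∀ i, F i)) : I = eS (supp I) := by
  classical
  ext x
  constructor
  · intro hx i hi
    by_contra hxi
    exact hi (mem_supp.2 ⟨x, hx, hxi⟩)
  · intro hx
    have : x = ∑ i : Fin n, Pi.single i (x i) := (Finset.univ_sum_single x).symm
    rw [this]
    refine Submodule.sum_mem _ fun i _ => ?_
    by_cases hi : i ∈ supp I
    · have h1 : Pi.single i (1 : F i) ∈ I := single_mem hi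
      have : Pi.single i (x i) = (Pi.single i (x i) : ∀ j, F j) * Pi.single i 1 := by
        funext j
        by_cases hj : j = i
        · subst hj; simp
        · simp [Pi.single_eq_of_ne hj]
      rw [this]
      exact I.mul_mem_left _ h1
    · have : x i = 0 := hx i hi
      rw [this, Pi.single_zero]
      exact I.zero_mem

theorem supp_eS (S : Finset (Fin n)) : supp (eS S : Ideal (∀ i, F i)) = S := by
  classical
  ext i
  rw [mem_supp]
  constructor
  · rintro ⟨x, hx, hxi⟩
    by_contra hi
    exact hxi (hx i hi)
  · intro hi
    refine ⟨Pi.single i 1, fun j hj => ?_, by simp⟩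
    have : j ≠ i := fun h => hj (h ▸ hi)
    simp [Pi.single_eq_of_ne this]

theorem eS_injective : Function.Injective (eS (n := n) (F := F)) := fun S T h => by
  rw [← supp_eS (F := F) S, h, supp_eS]

theorem eS_empty : (eS ∅ : Ideal (∀ i, F i)) = ⊥ := by
  ext x
  simp only [mem_eS, Ideal.mem_bot]
  constructor
  · intro h; funext i; exact h i (by simp)
  · intro h i _; rw [h]; rfl

theorem eS_univ : (eS Finset.univ : Ideal (∀ i, F i)) = ⊤ := by
  ext x; simp [mem_eS]

theorem eS_inf (S T : Finset (Fin n)) :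
    (eS S ⊓ eS T : Ideal (∀ i, F i)) = eS (S ∩ T) := by
  ext x
  simp only [Submodule.mem_inf, mem_eS, Finset.mem_inter]
  constructor
  · rintro ⟨h1, h2⟩ i hi
    rcases not_and_or.1 (fun hc => hi ⟨hc.1, hc.2⟩) with h | h
    · exact h1 i h
    · exact h2 i h
  · intro h
    exact ⟨fun i hi => h i fun hc => hi hc.1, fun i hi => h i fun hc => hi hc.2⟩

theorem eS_eq_bot_iff {S : Finset (Fin n)} : (eS S : Ideal (∀ i, F i)) = ⊥ ↔ S = ∅ := by
  rw [← eS_empty (F := F)]; exact eS_injective.eq_iff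

theorem eS_eq_top_iff {S : Finset (Fin n)} : (eS S : Ideal (∀ i, F i)) = ⊤ ↔ S = Finset.univ := by
  rw [← eS_univ (F := F)]; exact eS_injective.eq_iff



/-! ### Vertex layer -/

/-- Support of a vertex. -/
noncomputable def vsupp (v : IdealVert (∀ i, F i)) : Finset (Fin n) := supp v.1

theorem vsupp_ne_empty (v : IdealVert (∀ i, F i)) : vsupp v ≠ ∅ := fun h => by
  have := ideal_eq_eS_supp v.1
  rw [show supp v.1 = ∅ from h, eS_empty] at this
  exact v.2.1 this

theorem vsupp_ne_univ (v : IdealVert (∀ i, F i)) : vsupp v ≠ Finset.univ := fun h => by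
  have := ideal_eq_eS_supp v.1
  rw [show supp v.1 = Finset.univ from h, eS_univ] at this
  exact v.2.2 this

/-- Build a vertex from a nonempty proper subset of `Fin n`. -/
def mkV (S : Finset (Fin n)) (h1 : S ≠ ∅) (h2 : S ≠ Finset.univ) : IdealVert (∀ i, F i) :=
  ⟨eS S, fun h => h1 (eS_eq_bot_iff.1 h), fun h => h2 (eS_eq_top_iff.1 h)⟩

theorem vsupp_mkV (S : Finset (Fin n)) (h1 : S ≠ ∅) (h2 : S ≠ Finset.univ) :
    vsupp (mkV (F := F) S h1 h2) = S := supp_eS S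

theorem vsupp_injective : Function.Injective (vsupp (n := n) (F := F)) := by
  intro u v h
  have hu := ideal_eq_eS_supp u.1
  have hv := ideal_eq_eS_supp v.1
  have : u.1 = v.1 := by rw [hu, hv]; exact congrArg _ h
  exact Subtype.ext this

theorem eq_mkV {v : IdealVert (∀ i, F i)} {S : Finset (Fin n)} (h1 : S ≠ ∅)
    (h2 : S ≠ Finset.univ) (h : vsupp v = S) : v = mkV S h1 h2 :=
  vsupp_injective (by rw [h, vsupp_mkV])

theorem adj_iff {u v : IdealVert (∀ i, F i)} :
    (IGraph (∀ i, F i)).Adj u v ↔ vsupp u ≠ vsupp v ∧ vsupp u ∩ vsupp v ≠ ∅ := by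
  constructor
  · rintro ⟨hne, hinf⟩
    refine ⟨fun h => hne (vsupp_injective h), fun h => hinf ?_⟩
    rw [ideal_eq_eS_supp u.1, ideal_eq_eS_supp v.1, eS_inf]
    rw [show supp u.1 ∩ supp v.1 = ∅ from h, eS_empty]
  · rintro ⟨hne, hinf⟩
    refine ⟨fun h => hne (congrArg _ h), fun h => hinf ?_⟩
    rw [ideal_eq_eS_supp u.1, ideal_eq_eS_supp v.1, eS_inf] at h
    exact eS_eq_bot_iff.1 h

/-! ### Distances -/

theorem dist_eq_two (h3 : 3 ≤ n) {u v : IdealVert (∀ i, F i)}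
    (hdisj : vsupp u ∩ vsupp v = ∅) (hne : u ≠ v) :
    (IGraph (∀ i, F i)).dist u v = 2 := by
  classical
  obtain ⟨i, hi⟩ := Finset.nonempty_iff_ne_empty.2 (vsupp_ne_empty u)
  obtain ⟨j, hj⟩ := Finset.nonempty_iff_ne_empty.2 (vsupp_ne_empty v)
  have hij : i ≠ j := by
    rintro rfl
    exact absurd (Finset.mem_inter.2 ⟨hi, hj⟩) (by simp [hdisj])
  have hcard : ({i, j} : Finset (Fin n)).card ≤ 2 := Finset.card_insert_le _ _ |>.trans (by simp)
  have hprop : ({i, j} : Finset (Fin n)) ≠ Finset.univ := by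
    intro h
    have := h ▸ hcard
    rw [Finset.card_univ, Fintype.card_fin] at this
    omega
  set U : IdealVert (∀ i, F i) := mkV {i, j} (by simp [Finset.insert_ne_empty]) hprop with hU
  have hvU : vsupp U = {i, j} := vsupp_mkV _ _ _
  have hju : j ∉ vsupp u := fun h =>
    absurd (Finset.mem_inter.2 ⟨h, hj⟩) (by simp [hdisj])
  have hiv : i ∉ vsupp v := fun h =>
    absurd (Finset.mem_inter.2 ⟨hi, h⟩) (by simp [hdisj])
  have hadj1 : (IGraph (∀ i, F i)).Adj u U := by
    rw [adj_iff]
    constructor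
    · rw [hvU]; intro h; exact hju (h ▸ by simp)
    · intro h
      have : i ∈ vsupp u ∩ vsupp U := Finset.mem_inter.2 ⟨hi, by simp [hvU]⟩
      simp [h] at this
  have hadj2 : (IGraph (∀ i, F i)).Adj U v := by
    rw [adj_iff]
    constructor
    · rw [hvU]; intro h; exact hiv (h ▸ by simp)
    · intro h
      have : j ∈ vsupp U ∩ vsupp v := Finset.mem_inter.2 ⟨by simp [hvU], hj⟩
      simp [h] at this
  have hnadj : ¬ (IGraph (∀ i, F i)).Adj u v := by
    rw [adj_iff]
    rintro ⟨-, h⟩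
    exact h hdisj
  have hle : (IGraph (∀ i, F i)).dist u v ≤ 2 := by
    have := SimpleGraph.dist_le (SimpleGraph.Walk.cons hadj1 (SimpleGraph.Walk.cons hadj2 SimpleGraph.Walk.nil))
    simpa using this
  have hpos : 0 < (IGraph (∀ i, F i)).dist u v := by
    refine SimpleGraph.Reachable.pos_dist_of_ne ⟨SimpleGraph.Walk.cons hadj1 (SimpleGraph.Walk.cons hadj2 SimpleGraph.Walk.nil)⟩ hne
  have hne1 : (IGraph (∀ i, F i)).dist u v ≠ 1 := by
    intro h1; exact hnadj (SimpleGraph.dist_eq_one_iff_adj.1 h1)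
  omega

theorem dist_eq_one {u v : IdealVert (∀ i, F i)} (h : (IGraph (∀ i, F i)).Adj u v) :
    (IGraph (∀ i, F i)).dist u v = 1 := SimpleGraph.dist_eq_one_iff_adj.2 h

theorem dist_cases (h3 : 3 ≤ n) (u v : IdealVert (∀ i, F i)) (hne : u ≠ v) :
    (IGraph (∀ i, F i)).dist u v = 1 ∨ (IGraph (∀ i, F i)).dist u v = 2 := by
  by_cases h : (IGraph (∀ i, F i)).Adj u v
  · exact Or.inl (dist_eq_one h)
  · refine Or.inr (dist_eq_two h3 ?_ hne)
    by_contra hd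
    exact h (adj_iff.2 ⟨fun hs => hne (vsupp_injective hs), hd⟩)

theorem sr_self_left {V : Type*} (G : SimpleGraph V) (u v : V) : StronglyResolves G u u v :=
  Or.inr (by rw [SimpleGraph.dist_self]; ring)

theorem sr_self_right {V : Type*} (G : SimpleGraph V) (u v : V) : StronglyResolves G v u v :=
  Or.inl (by rw [SimpleGraph.dist_self]; ring)

/-! ### Counting -/

instance : Finite (IdealVert (∀ i, F i)) :=
  Finite.of_injective _ (vsupp_injective (n := n) (F := F))

theorem card_subtype_aux (hn : 1 ≤ n) (i0 : Fin n) :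
    Nat.card {S : Finset (Fin n) // S ≠ ∅ ∧ i0 ∉ S} = 2 ^ (n - 1) - 1 := by
  classical
  rw [Nat.card_eq_fintype_card, Fintype.card_subtype]
  have hfilter : (Finset.univ.filter fun S : Finset (Fin n) => S ≠ ∅ ∧ i0 ∉ S)
      = ((Finset.univ.erase i0).powerset).erase ∅ := by
    ext S
    simp only [Finset.mem_filter, Finset.mem_univ, true_and, Finset.mem_erase,
      Finset.mem_powerset, Finset.subset_erase, Finset.subset_univ, true_and]
    try tauto
  rw [hfilter, Finset.card_erase_of_mem (by simp), Finset.card_powerset,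
    Finset.card_erase_of_mem (Finset.mem_univ i0), Finset.card_univ, Fintype.card_fin]

/-- Complementation equivalence between the two relevant families. -/
def complEquiv (i0 : Fin n) :
    {S : Finset (Fin n) // i0 ∈ S ∧ S ≠ Finset.univ} ≃ {S : Finset (Fin n) // S ≠ ∅ ∧ i0 ∉ S} where
  toFun S := ⟨S.1ᶜ, by
      simp only [ne_eq, Finset.compl_eq_empty_iff]
      exact ⟨S.2.2, by simp [S.2.1]⟩⟩
  invFun T := ⟨T.1ᶜ, by
      refine ⟨by simp [T.2.2], ?_⟩
      simp only [ne_eq, Finset.compl_eq_univ_iff]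
      exact T.2.1⟩
  left_inv S := Subtype.ext (compl_compl S.1)
  right_inv T := Subtype.ext (compl_compl T.1)

/-! ### The resolving set -/

/-- The strong resolving set: all vertices whose support misses `i0`. -/
def Wset (i0 : Fin n) : Set (IdealVert (∀ i, F i)) := {v | i0 ∉ vsupp v}

theorem mem_Wset {i0 : Fin n} {v : IdealVert (∀ i, F i)} :
    v ∈ Wset (F := F) i0 ↔ i0 ∉ vsupp v := Iff.rfl

theorem card_Wset (hn : 1 ≤ n) (i0 : Fin n) :
    Nat.card (Wset (F := F) i0) = 2 ^ (n - 1) - 1 := by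
  have e : Wset (F := F) i0 ≃ {S : Finset (Fin n) // S ≠ ∅ ∧ i0 ∉ S} :=
    { toFun := fun v => ⟨vsupp v.1, vsupp_ne_empty v.1, v.2⟩
      invFun := fun S => ⟨mkV S.1 S.2.1 (by intro h; exact S.2.2 (h ▸ Finset.mem_univ i0)),
        by rw [mem_Wset, vsupp_mkV]; exact S.2.2⟩
      left_inv := fun v => Subtype.ext (vsupp_injective (by rw [vsupp_mkV]))
      right_inv := fun S => Subtype.ext (by
        refine vsupp_mkV _ S.2.1 ?_
        intro h; exact S.2.2 (h ▸ Finset.mem_univ i0)) }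
  rw [Nat.card_congr e, card_subtype_aux hn i0]

theorem resolve_aux (i0 : Fin n) {u v : IdealVert (∀ i, F i)}
    (hu : i0 ∈ vsupp u) (hv : i0 ∈ vsupp v) {i : Fin n}
    (hiu : i ∈ vsupp u) (hiv : i ∉ vsupp v) :
    ∃ w ∈ Wset (F := F) i0,
      (IGraph (∀ i, F i)).dist u w = 1 ∧ (IGraph (∀ i, F i)).dist v w = 2 := by
  classical
  -- first, 3 ≤ n
  have hii0 : i ≠ i0 := fun h => hiv (h ▸ hv)
  have hsub : ({i0, i} : Finset (Fin n)) ⊆ vsupp u := by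
    intro j hj
    rcases Finset.mem_insert.1 hj with rfl | hj
    · exact hu
    · rw [Finset.mem_singleton.1 hj]; exact hiu
  have hcard2 : 2 ≤ (vsupp u).card := by
    have : ({i0, i} : Finset (Fin n)).card = 2 := by
      rw [Finset.card_insert_of_notMem (by simp [Ne.symm hii0]), Finset.card_singleton]
    calc 2 = ({i0, i} : Finset (Fin n)).card := this.symm
      _ ≤ (vsupp u).card := Finset.card_le_card hsub
  have hlt : (vsupp u).card < n := by
    have := Finset.card_lt_card (Finset.ssubset_univ_iff.2 (vsupp_ne_univ u))
    simpa using this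
  have h3 : 3 ≤ n := by omega
  -- the resolving vertex
  have hc1 : (vsupp v)ᶜ ≠ ∅ := by
    simp only [ne_eq, Finset.compl_eq_empty_iff]; exact vsupp_ne_univ v
  have hc2 : (vsupp v)ᶜ ≠ Finset.univ := by
    simp only [ne_eq, Finset.compl_eq_univ_iff]; exact vsupp_ne_empty v
  refine ⟨mkV _ hc1 hc2, ?_, ?_, ?_⟩
  · rw [mem_Wset, vsupp_mkV]; simp [hv]
  · refine dist_eq_one (adj_iff.2 ⟨?_, ?_⟩)
    · rw [vsupp_mkV]
      intro h
      have : i0 ∈ (vsupp v)ᶜ := h ▸ hu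
      simp [hv] at this
    · rw [vsupp_mkV]
      intro h
      have : i ∈ vsupp u ∩ (vsupp v)ᶜ := Finset.mem_inter.2 ⟨hiu, by simp [hiv]⟩
      simp [h] at this
  · refine dist_eq_two h3 ?_ ?_
    · rw [vsupp_mkV]; simp
    · intro h
      have : i0 ∈ vsupp (mkV (F := F) (vsupp v)ᶜ hc1 hc2) := h ▸ hv
      rw [vsupp_mkV] at this
      simp [hv] at this

theorem Wset_resolving (i0 : Fin n) :
    IsStrongResolvingSet (IGraph (∀ i, F i)) (Wset (F := F) i0) := by
  intro u v hne
  by_cases hu : u ∈ Wset (F := F) i0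
  · exact ⟨u, hu, sr_self_left _ u v⟩
  by_cases hv : v ∈ Wset (F := F) i0
  · exact ⟨v, hv, sr_self_right _ u v⟩
  rw [mem_Wset, not_not] at hu hv
  have hsne : vsupp u ≠ vsupp v := fun h => hne (vsupp_injective h)
  have hadj : (IGraph (∀ i, F i)).Adj u v := by
    refine adj_iff.2 ⟨hsne, fun h => ?_⟩
    have : i0 ∈ vsupp u ∩ vsupp v := Finset.mem_inter.2 ⟨hu, hv⟩
    simp [h] at this
  have huv1 : (IGraph (∀ i, F i)).dist u v = 1 := dist_eq_one hadj
  rcases not_and_or.1 (fun hc => hsne (subset_antisymm hc.1 hc.2)) with hns | hns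
  · obtain ⟨i, hiu, hiv⟩ := Finset.not_subset.1 hns
    obtain ⟨w, hwW, hw1, hw2⟩ := resolve_aux i0 hu hv hiu hiv
    refine ⟨w, hwW, Or.inr ?_⟩
    rw [SimpleGraph.dist_comm (u := v) (v := u), huv1, hw2, hw1]
  · obtain ⟨i, hiv, hiu⟩ := Finset.not_subset.1 hns
    obtain ⟨w, hwW, hw1, hw2⟩ := resolve_aux i0 hv hu hiv hiu
    refine ⟨w, hwW, Or.inl ?_⟩
    rw [huv1, hw2, hw1]

/-! ### Lower bound -/

theorem key_lemma (hn : 2 ≤ n) (i0 : Fin n) {W : Set (IdealVert (∀ i, F i))}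
    (hW : IsStrongResolvingSet (IGraph (∀ i, F i)) W) {S : Finset (Fin n)}
    (hS : i0 ∈ S) (hSu : S ≠ Finset.univ) :
    ∃ w ∈ W, vsupp w = S ∨ vsupp w = Sᶜ := by
  classical
  have h1 : S ≠ ∅ := fun h => by simp [h] at hS
  have hc1 : Sᶜ ≠ ∅ := by simp only [ne_eq, Finset.compl_eq_empty_iff]; exact hSu
  have hc2 : Sᶜ ≠ Finset.univ := by simp only [ne_eq, Finset.compl_eq_univ_iff]; exact h1
  set u : IdealVert (∀ i, F i) := mkV S h1 hSu with hu
  set v : IdealVert (∀ i, F i) := mkV Sᶜ hc1 hc2 with hv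
  have hvu : vsupp u = S := vsupp_mkV _ _ _
  have hvv : vsupp v = Sᶜ := vsupp_mkV _ _ _
  have hne : u ≠ v := by
    intro h
    have hh : vsupp u = vsupp v := congrArg _ h
    rw [hvu, hvv] at hh
    have : i0 ∈ Sᶜ := hh ▸ hS
    simp [hS] at this
  obtain ⟨w, hwW, hw⟩ := hW u v hne
  refine ⟨w, hwW, ?_⟩
  rcases le_or_gt 3 n with h3 | h3
  · by_contra hcon
    push_neg at hcon
    have hwu : w ≠ u := fun h => hcon.1 (by rw [h, hvu])
    have hwv : w ≠ v := fun h => hcon.2 (by rw [h, hvv])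
    have duv : (IGraph (∀ i, F i)).dist u v = 2 := by
      refine dist_eq_two h3 ?_ hne
      rw [hvu, hvv]; simp
    have duw := dist_cases h3 u w (Ne.symm hwu)
    have dvw := dist_cases h3 v w (Ne.symm hwv)
    rw [StronglyResolves] at hw
    rw [SimpleGraph.dist_comm (u := v) (v := u)] at hw
    rcases duw with h4 | h4 <;> rcases dvw with h5 | h5 <;>
      rw [h4, h5, duv] at hw <;> omega
  · obtain rfl : n = 2 := by omega
    have hdec : ∀ (j : Fin 2) (A B : Finset (Fin 2)), j ∈ A → A ≠ Finset.univ →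
        B ≠ ∅ → B ≠ Finset.univ → (B = A ∨ B = Aᶜ) := by decide
    exact hdec i0 S (vsupp w) hS hSu (vsupp_ne_empty w) (vsupp_ne_univ w)

theorem lower_bound (hn : 2 ≤ n) (i0 : Fin n) {W : Set (IdealVert (∀ i, F i))}
    (hW : IsStrongResolvingSet (IGraph (∀ i, F i)) W) :
    2 ^ (n - 1) - 1 ≤ Nat.card W := by
  classical
  have key := fun (S : {S : Finset (Fin n) // i0 ∈ S ∧ S ≠ Finset.univ}) =>
    key_lemma hn i0 hW S.2.1 S.2.2
  let f : {S : Finset (Fin n) // i0 ∈ S ∧ S ≠ Finset.univ} → W :=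
    fun S => ⟨(key S).choose, (key S).choose_spec.1⟩
  have hf : ∀ S, vsupp (f S).1 = S.1 ∨ vsupp (f S).1 = S.1ᶜ :=
    fun S => (key S).choose_spec.2
  have hinj : Function.Injective f := by
    intro S T h
    have hS := hf S
    have hT := hf T
    rw [h] at hS
    refine Subtype.ext ?_
    rcases hS with h1 | h1 <;> rcases hT with h2 | h2
    · rw [← h1, ← h2]
    · exfalso
      have : i0 ∈ T.1ᶜ := by rw [← h2, h1]; exact S.2.1
      simp [T.2.1] at this
    · exfalso
      have : i0 ∈ S.1ᶜ := by rw [← h1, h2]; exact T.2.1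
      simp [S.2.1] at this
    · exact compl_injective (by rw [← h1, ← h2])
  have hcard := Nat.card_le_card_of_injective f hinj
  have : Nat.card {S : Finset (Fin n) // i0 ∈ S ∧ S ≠ Finset.univ} = 2 ^ (n - 1) - 1 := by
    rw [Nat.card_congr (complEquiv i0), card_subtype_aux (by omega) i0]
  omega

end SdimAux

/-- for a product `R = F₁ × ⋯ × Fₙ` of fields with `n ≥ 2`,
`sdim_M(IG(R)) = 2^n - 2^(n-1) - 1`. -/
theorem sdim_intersection_graph_product_of_fields (n : ℕ) (hn : 2 ≤ n)
    (F : Fin n → Type*) [∀ i, Field (F i)] :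
    sdim (IGraph (∀ i, F i)) = 2 ^ n - 2 ^ (n - 1) - 1 := by
  have i0 : Fin n := ⟨0, by omega⟩
  have hmem : 2 ^ (n - 1) - 1 ∈
      {k | ∃ W : Set (IdealVert (∀ i, F i)), W.Finite ∧
        IsStrongResolvingSet (IGraph (∀ i, F i)) W ∧ Nat.card W = k} :=
    ⟨SdimAux.Wset i0, Set.toFinite _, SdimAux.Wset_resolving i0,
      SdimAux.card_Wset (by omega) i0⟩
  have hs : sdim (IGraph (∀ i, F i)) = 2 ^ (n - 1) - 1 := by
    refine le_antisymm (Nat.sInf_le hmem) (le_csInf ⟨_, hmem⟩ ?_)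
    rintro k ⟨W, hWf, hWr, rfl⟩
    exact SdimAux.lower_bound hn i0 hWr
  have hpow : 2 ^ n = 2 ^ (n - 1) * 2 := by
    rw [← pow_succ]
    congr 1
    omega
  have hge : 1 ≤ 2 ^ (n - 1) := Nat.one_le_two_pow
  omega
end

section
/- Let F be a finite field, let n ≥ 3, and let V = F^n be the n-dimensional vector space over F with its standard basis. Let IG(V) be the nonzero component graph of V: its vertices are the nonzero vectors of V, and distinct vectors a, b are adjacent iff there is an index i with a_i ≠ 0 and b_i ≠ 0. Then sdim_M(IG(V)) = (|F|^n − 1) − 2^{n−1}. -/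
/-- The nonzero component graph of the vector space `F^n` (with respect to the standard
basis): vertices are the nonzero vectors, and distinct vectors are adjacent iff some
coordinate is nonzero in both. -/
def NZCGraph (F : Type*) [Field F] (n : ℕ) :
    SimpleGraph {a : Fin n → F // a ≠ 0} where
  Adj a b := a ≠ b ∧ ∃ i : Fin n, a.1 i ≠ 0 ∧ b.1 i ≠ 0
  symm := ⟨fun a b h => ⟨h.1.symm, h.2.imp fun i hi => ⟨hi.2, hi.1⟩⟩⟩
  loopless := ⟨fun a h => h.1 rfl⟩

section Aux

variable {F : Type*} [Field F] {n : ℕ}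

local notation "V" => {a : Fin n → F // a ≠ 0}
local notation "G" => NZCGraph F n

lemma NZC.exists_ne (a : V) : ∃ i, a.1 i ≠ 0 := Function.ne_iff.mp a.2

lemma NZC.adj_iff {a b : V} : (G).Adj a b ↔ a ≠ b ∧ ∃ i, a.1 i ≠ 0 ∧ b.1 i ≠ 0 :=
  Iff.rfl

/-- If supports are disjoint and both nonzero, there's a common neighbor `a+b`. -/
lemma NZC.walk_two {a b : V} (hne : a ≠ b) (hdisj : ¬ ∃ i, a.1 i ≠ 0 ∧ b.1 i ≠ 0) :
    ∃ m : V, (G).Adj a m ∧ (G).Adj m b := by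
  push_neg at hdisj
  obtain ⟨i, hi⟩ := NZC.exists_ne a
  obtain ⟨j, hj⟩ := NZC.exists_ne b
  have hbi : b.1 i = 0 := hdisj i hi
  have haj : a.1 j = 0 := by
    by_contra h; exact hj (hdisj j h)
  have hm0 : a.1 + b.1 ≠ 0 := by
    intro h
    have := congrFun h i
    simp [hbi] at this
    exact hi this
  refine ⟨⟨a.1 + b.1, hm0⟩, ⟨?_, i, hi, ?_⟩, ⟨?_, j, ?_, hj⟩⟩
  · intro h
    have h2 := congrFun (congrArg Subtype.val h) j
    simp only [Pi.add_apply, haj, zero_add] at h2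
    exact hj (by simpa [haj] using h2.symm)
  · simpa [hbi] using hi
  · intro h
    have h2 := congrFun (congrArg Subtype.val h) i
    simp only [Pi.add_apply, hbi, add_zero] at h2
    exact hi (by simpa [hbi] using h2)
  · simpa [haj] using hj

end Aux

section Aux
open SimpleGraph
variable {F : Type*} [Field F] {n : ℕ}

local notation "V" => {a : Fin n → F // a ≠ 0}
local notation "G" => NZCGraph F n

lemma NZC.reachable (a b : V) : (G).Reachable a b := by
  by_cases hab : a = b
  · exact hab ▸ Reachable.refl a
  by_cases hint : ∃ i, a.1 i ≠ 0 ∧ b.1 i ≠ 0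
  · exact (Adj.reachable ⟨hab, hint⟩)
  · obtain ⟨m, h1, h2⟩ := NZC.walk_two hab hint
    exact (h1.reachable).trans h2.reachable

lemma NZC.dist_le_two (a b : V) : (G).dist a b ≤ 2 := by
  by_cases hab : a = b
  · rw [hab, SimpleGraph.dist_self]; omega
  by_cases hint : ∃ i, a.1 i ≠ 0 ∧ b.1 i ≠ 0
  · have : (G).dist a b = 1 := dist_eq_one_iff_adj.mpr ⟨hab, hint⟩
    omega
  · obtain ⟨m, h1, h2⟩ := NZC.walk_two hab hint
    have := dist_le (Walk.cons h1 (Walk.cons h2 Walk.nil))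
    simpa using this

lemma NZC.dist_eq_zero {a b : V} (h : (G).dist a b = 0) : a = b :=
  (NZC.reachable a b).dist_eq_zero_iff.mp h

lemma NZC.dist_eq_one {a b : V} (hab : a ≠ b) (hint : ∃ i, a.1 i ≠ 0 ∧ b.1 i ≠ 0) :
    (G).dist a b = 1 := dist_eq_one_iff_adj.mpr ⟨hab, hint⟩

lemma NZC.dist_eq_two {a b : V} (hab : a ≠ b) (hint : ¬ ∃ i, a.1 i ≠ 0 ∧ b.1 i ≠ 0) :
    (G).dist a b = 2 := by
  have h2 := NZC.dist_le_two a b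
  have h0 : (G).dist a b ≠ 0 := fun h => hab (NZC.dist_eq_zero h)
  have h1 : (G).dist a b ≠ 1 := fun h => hint (dist_eq_one_iff_adj.mp h).2
  omega

lemma NZC.inter_of_dist_ne_two {a b : V} (h : (G).dist a b = 2) :
    a ≠ b ∧ ¬ ∃ i, a.1 i ≠ 0 ∧ b.1 i ≠ 0 := by
  constructor
  · intro hab; rw [hab, SimpleGraph.dist_self] at h; omega
  · intro hint
    by_cases hab : a = b
    · rw [hab, SimpleGraph.dist_self] at h; omega
    · rw [NZC.dist_eq_one hab hint] at h; omega

end Aux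

section Aux2
open SimpleGraph
variable {F : Type*} [Field F] {n : ℕ}

local notation "V" => {a : Fin n → F // a ≠ 0}
local notation "G" => NZCGraph F n

lemma NZC.resolves_left (u v : V) : StronglyResolves (G) u u v :=
  Or.inr (by simp [SimpleGraph.dist_self])

lemma NZC.resolves_right (u v : V) : StronglyResolves (G) v u v :=
  Or.inl (by simp [SimpleGraph.dist_self])

/-- the maximal-distance pair condition: equal or disjoint supports -/
def NZC.MMD (u v : V) : Prop :=
  u ≠ v ∧ ((∀ i : Fin n, u.1 i ≠ 0 ↔ v.1 i ≠ 0) ∨ ¬ ∃ i, u.1 i ≠ 0 ∧ v.1 i ≠ 0)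

lemma NZC.MMD.symm {u v : V} (h : NZC.MMD u v) : NZC.MMD v u :=
  ⟨h.1.symm, h.2.imp (fun he i => (he i).symm) (fun hd ⟨i, h1, h2⟩ => hd ⟨i, h2, h1⟩)⟩

/-- If `(u,v)` is an MMD pair and `d(u,w) = d(u,v) + d(v,w)` then `w = v`. -/
lemma NZC.eq_of_resolve_half {u v w : V} (hmm : NZC.MMD u v)
    (h : (G).dist u w = (G).dist u v + (G).dist v w) : w = v := by
  obtain ⟨hne, hca⟩ := hmm
  have hlu := NZC.dist_le_two u w
  rcases hca with heq | hdisj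
  · have hint : ∃ i, u.1 i ≠ 0 ∧ v.1 i ≠ 0 := by
      obtain ⟨i, hi⟩ := NZC.exists_ne u
      exact ⟨i, hi, (heq i).mp hi⟩
    rw [NZC.dist_eq_one hne hint] at h
    by_cases h0 : (G).dist v w = 0
    · exact (NZC.dist_eq_zero h0).symm
    · exfalso
      have h1 : (G).dist v w = 1 := by omega
      have h2 : (G).dist u w = 2 := by omega
      obtain ⟨hvw, i, hvi, hwi⟩ := dist_eq_one_iff_adj.mp h1
      exact (NZC.inter_of_dist_ne_two h2).2 ⟨i, (heq i).mpr hvi, hwi⟩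
  · rw [NZC.dist_eq_two hne hdisj] at h
    have h0 : (G).dist v w = 0 := by omega
    exact (NZC.dist_eq_zero h0).symm

lemma NZC.resolve_aux {W : Set V}
    (hW : ∀ u v : V, NZC.MMD u v → u ∈ W ∨ v ∈ W) {u v : V} (huW : u ∉ W)
    (hne : u ≠ v) (hint : ∃ i, u.1 i ≠ 0 ∧ v.1 i ≠ 0) {i : Fin n}
    (hui : u.1 i = 0) (hvi : v.1 i ≠ 0) :
    ∃ w ∈ W, StronglyResolves (G) w u v := by
  classical
  have h1 : (1 : F) ≠ 0 := one_ne_zero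
  have hz0 : ((fun j => if u.1 j = 0 then (1 : F) else 0) : Fin n → F) ≠ 0 := by
    intro h
    have := congrFun h i
    simp [hui] at this
  set z : V := ⟨fun j => if u.1 j = 0 then (1 : F) else 0, hz0⟩ with hzdef
  have hzj : ∀ j : Fin n, u.1 j ≠ 0 → z.1 j = 0 := by
    intro j hj; simp [hzdef, hj]
  have hzi : z.1 i ≠ 0 := by simp [hzdef, hui]
  have hzu : z ≠ u := by
    intro h
    rw [h] at hzi
    exact hzi hui
  have hdisj : ¬ ∃ j, z.1 j ≠ 0 ∧ u.1 j ≠ 0 := by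
    rintro ⟨j, hj1, hj2⟩; exact hj1 (hzj j hj2)
  have hzW : z ∈ W := by
    rcases hW z u ⟨hzu, Or.inr hdisj⟩ with h | h
    · exact h
    · exact absurd h huW
  refine ⟨z, hzW, Or.inl ?_⟩
  have duz : (G).dist u z = 2 := by
    refine NZC.dist_eq_two (Ne.symm hzu) ?_
    rintro ⟨j, hj1, hj2⟩; exact hj2 (hzj j hj1)
  have dvz : (G).dist v z = 1 := by
    refine NZC.dist_eq_one ?_ ⟨i, hvi, hzi⟩
    intro h
    obtain ⟨j, hj1, hj2⟩ := hint
    rw [h] at hj2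
    exact hj2 (hzj j hj1)
  rw [duz, dvz, NZC.dist_eq_one hne hint]

lemma NZC.srs_iff {W : Set V} :
    IsStrongResolvingSet (G) W ↔ ∀ u v : V, NZC.MMD u v → u ∈ W ∨ v ∈ W := by
  constructor
  · intro hW u v hmm
    obtain ⟨w, hwW, hres⟩ := hW u v hmm.1
    rcases hres with h | h
    · exact Or.inr ((NZC.eq_of_resolve_half hmm h) ▸ hwW)
    · exact Or.inl ((NZC.eq_of_resolve_half hmm.symm h) ▸ hwW)
  · intro hW u v hne
    by_cases huW : u ∈ W
    · exact ⟨u, huW, NZC.resolves_left u v⟩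
    by_cases hvW : v ∈ W
    · exact ⟨v, hvW, NZC.resolves_right u v⟩
    have hint : ∃ i, u.1 i ≠ 0 ∧ v.1 i ≠ 0 := by
      by_contra hd
      rcases hW u v ⟨hne, Or.inr hd⟩ with h | h
      exacts [huW h, hvW h]
    have hneq : ¬ ∀ i : Fin n, u.1 i ≠ 0 ↔ v.1 i ≠ 0 := by
      intro he
      rcases hW u v ⟨hne, Or.inl he⟩ with h | h
      exacts [huW h, hvW h]
    push_neg at hneq
    obtain ⟨i, hi⟩ := hneq
    rcases hi with ⟨hui, hvi⟩ | ⟨hui, hvi⟩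
    · obtain ⟨w, hw1, hw2⟩ := NZC.resolve_aux hW hvW (Ne.symm hne)
        (hint.imp fun j hj => ⟨hj.2, hj.1⟩) hvi hui
      exact ⟨w, hw1, Or.symm hw2⟩
    · exact NZC.resolve_aux hW huW hne hint hui hvi
end Aux2

section Aux3
open SimpleGraph
variable {F : Type*} [Field F] [Fintype F] {n : ℕ}

local notation "V" => {a : Fin n → F // a ≠ 0}

lemma NZC.cardV : Nat.card V = Fintype.card F ^ n - 1 := by
  classical
  rw [Nat.card_eq_fintype_card]
  have h := Fintype.card_subtype_compl (fun a : Fin n → F => a = 0)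
  simp only [Fintype.card_subtype_eq, Fintype.card_fun, Fintype.card_fin] at h
  exact h

lemma NZC.cardE (hn : 0 < n) (i0 : Fin n) :
    Nat.card ({a : V | a.1 i0 ≠ 0 ∧ ∀ j, a.1 j = 0 ∨ a.1 j = 1} : Set V) = 2 ^ (n - 1) := by
  classical
  set E : Set V := {a : V | a.1 i0 ≠ 0 ∧ ∀ j, a.1 j = 0 ∨ a.1 j = 1} with hE
  have hval : ∀ a : V, a ∈ E → ∀ j, a.1 j = if a.1 j ≠ 0 then 1 else 0 := by
    intro a ha j
    rcases ha.2 j with h | h <;> simp [h]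
  set f : E → ({j : Fin n // j ≠ i0} → Bool) := fun a j => decide (a.1.1 j.1 ≠ 0) with hf
  have hbij : Function.Bijective f := by
    constructor
    · intro a b hab
      ext j
      rw [hval a.1 a.2 j, hval b.1 b.2 j]
      by_cases hj : j = i0
      · subst hj
        simp [a.2.1, b.2.1]
      · have := congrFun hab ⟨j, hj⟩
        simp only [hf, decide_eq_decide] at this
        by_cases h : a.1.1 j ≠ 0
        · simp [h, this.mp h]
        · rw [if_neg h, if_neg (fun hb => h (this.mpr hb))]
    · intro g
      set aF : Fin n → F := (fun j => if h : j = i0 then 1 else if g ⟨j, h⟩ then 1 else 0) with haF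
      have h0 : aF ≠ 0 := by
        intro h
        have := congrFun h i0
        simp [haF] at this
      have hmem : (⟨aF, h0⟩ : V) ∈ E := by
        constructor
        · simp [haF]
        · intro j
          by_cases hj : j = i0
          · right; simp [haF, hj]
          · cases hg : g ⟨j, hj⟩ <;> simp [haF, hj, hg]
      refine ⟨⟨⟨aF, h0⟩, hmem⟩, ?_⟩
      funext j
      obtain ⟨j, hj⟩ := j
      cases hg : g ⟨j, hj⟩ <;> simp [hf, haF, hj, hg]
  have hcard := Nat.card_eq_of_bijective f hbij
  rw [hcard, Nat.card_eq_fintype_card]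
  simp only [Fintype.card_fun, Fintype.card_bool]
  congr 1
  have := Fintype.card_subtype_compl (fun j : Fin n => j = i0)
  simp only [Fintype.card_subtype_eq, Fintype.card_fin] at this
  exact this

end Aux3

/-- for a finite field `F` and `n ≥ 3`, the strong metric dimension of the
nonzero component graph of `F^n` equals `(|F|^n - 1) - 2^(n-1)`. -/
theorem sdim_nonzero_component_graph (F : Type*) [Field F] [Fintype F]
    (n : ℕ) (hn : 3 ≤ n) :
    sdim (NZCGraph F n) = (Fintype.card F ^ n - 1) - 2 ^ (n - 1) := by
  classical
  have hn0 : 0 < n := by omega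
  set q := Fintype.card F with hq
  have hcV : Nat.card {a : Fin n → F // a ≠ 0} = q ^ n - 1 := NZC.cardV
  set i0 : Fin n := ⟨0, hn0⟩ with hi0
  set E : Set {a : Fin n → F // a ≠ 0} :=
    {a | a.1 i0 ≠ 0 ∧ ∀ j, a.1 j = 0 ∨ a.1 j = 1} with hE
  have hcE : Nat.card E = 2 ^ (n - 1) := NZC.cardE hn0 i0
  have h2n : (2:ℕ) ^ n = 2 * 2 ^ (n - 1) := by
    have hx : n - 1 + 1 = n := by omega
    conv_lhs => rw [← hx]
    rw [pow_succ]; ring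
  -- the complement of E is a strong resolving set
  have hsrs : IsStrongResolvingSet (NZCGraph F n) Eᶜ := by
    rw [NZC.srs_iff]
    intro u v hmm
    by_contra hc
    push_neg at hc
    simp only [Set.mem_compl_iff, not_not] at hc
    obtain ⟨hu, hv⟩ := hc
    obtain ⟨hmne, hca⟩ := hmm
    rcases hca with heq | hdisj
    · apply hmne
      apply Subtype.ext
      funext j
      rcases hu.2 j with h0 | h1 <;> rcases hv.2 j with g0 | g1
      · rw [h0, g0]
      · exact absurd ((heq j).mpr (g1 ▸ one_ne_zero)) (fun h => h h0)
      · exact absurd ((heq j).mp (h1 ▸ one_ne_zero)) (fun h => h g0)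
      · rw [h1, g1]
    · exact hdisj ⟨i0, hu.1, hv.1⟩
  set S : Set ℕ := {k | ∃ W : Set {a : Fin n → F // a ≠ 0}, W.Finite ∧
      IsStrongResolvingSet (NZCGraph F n) W ∧ Nat.card W = k} with hS
  have hsum : E.ncard + Eᶜ.ncard = q ^ n - 1 := by
    rw [Set.ncard_add_ncard_compl E (Set.toFinite _) (Set.toFinite _)]
    exact hcV
  have hcE' : E.ncard = 2 ^ (n - 1) := by rw [← Nat.card_coe_set_eq]; exact hcE
  have hk0mem : (q ^ n - 1) - 2 ^ (n - 1) ∈ S := by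
    refine ⟨Eᶜ, Set.toFinite _, hsrs, ?_⟩
    rw [Nat.card_coe_set_eq]
    omega
  have hlb : ∀ k ∈ S, (q ^ n - 1) - 2 ^ (n - 1) ≤ k := by
    rintro k ⟨W, hWf, hWsrs, rfl⟩
    rw [NZC.srs_iff] at hWsrs
    set T : Finset {a : Fin n → F // a ≠ 0} := (Wᶜ).toFinset with hT
    have hTmem : ∀ a, a ∈ T ↔ a ∉ W := by intro a; simp [hT]
    set f : {a : Fin n → F // a ≠ 0} → Finset (Fin n) :=
      fun a => Finset.univ.filter (fun i => a.1 i ≠ 0) with hfd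
    have hmemf : ∀ a (i : Fin n), i ∈ f a ↔ a.1 i ≠ 0 := by
      intro a i; simp [hfd]
    have hinj : Set.InjOn f ↑T := by
      intro u hu v hv hfe
      by_contra hne
      have heq : ∀ i : Fin n, u.1 i ≠ 0 ↔ v.1 i ≠ 0 := fun i => by
        rw [← hmemf u i, ← hmemf v i, hfe]
      rcases hWsrs u v ⟨hne, Or.inl heq⟩ with h | h
      · exact (hTmem u).mp (Finset.mem_coe.mp hu) h
      · exact (hTmem v).mp (Finset.mem_coe.mp hv) h
    have hints : ((T.image f : Finset (Finset (Fin n))) : Set (Finset (Fin n))).Intersecting := by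
      intro s hs t ht
      obtain ⟨u, hu, rfl⟩ := Finset.mem_image.mp (Finset.mem_coe.mp hs)
      obtain ⟨v, hv, rfl⟩ := Finset.mem_image.mp (Finset.mem_coe.mp ht)
      intro hdisj
      by_cases huv : u = v
      · subst huv
        rw [disjoint_self] at hdisj
        obtain ⟨i, hi⟩ := NZC.exists_ne u
        have : i ∈ f u := (hmemf u i).mpr hi
        rw [hdisj] at this
        exact absurd this (Finset.notMem_empty i)
      · have hni : ¬ ∃ i, u.1 i ≠ 0 ∧ v.1 i ≠ 0 := by
          rintro ⟨i, h1, h2⟩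
          exact (Finset.disjoint_left.mp hdisj ((hmemf u i).mpr h1)) ((hmemf v i).mpr h2)
        rcases hWsrs u v ⟨huv, Or.inr hni⟩ with h | h
        · exact (hTmem u).mp hu h
        · exact (hTmem v).mp hv h
    have hcard2 := hints.card_le
    rw [Finset.card_image_of_injOn hinj, Fintype.card_finset, Fintype.card_fin] at hcard2
    have hTcard : T.card = Wᶜ.ncard := (Set.ncard_eq_toFinset_card' Wᶜ).symm
    have hWsum : W.ncard + Wᶜ.ncard = q ^ n - 1 := by
      rw [Set.ncard_add_ncard_compl W (Set.toFinite _) (Set.toFinite _)]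
      exact hcV
    rw [Nat.card_coe_set_eq]
    omega
  refine le_antisymm (Nat.sInf_le hk0mem) ?_
  exact hlb _ (Nat.sInf_mem ⟨_, hk0mem⟩)
end
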